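/- arXiv:2605.06704 — 2 statements merged into one kernel-verified Lean document; each statement's English description precedes it below -/
import Mathlib

section
/- Let α be a real constant with α(α−3)(2α−3) ≠ 0, set m := (2α³−9α²+9α)^{1/3} (real cube root) and s := (3α²−9α+9)/m². Then there exist no nonempty open set V ⊆ ℝ² and point transformation (x̄,ū) = (φ(x,u), ψ(x,u)) on V under which the ODE u‴ = α·(u″)²/u′ is equivalent to the canonical form ū‴ = s·ū′ + ū; that is, for every such V and point transformation there is a smooth solution u(x) of u‴ = α(u″)²/u′ with u′ ≠ 0, graph in V, and (d/dx)φ(x,u(x)) ≠ 0, whose transform fails to solve ū‴ = s·ū′ + ū. -/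
/-!
Invariants of the third-order ODE `u''' = f(x, u, u', u'')` under contact
transformations, following Cartan's equivalence method.
We write `p = u'`, `q = u''`.
-/

noncomputable section

/-- The real cube root of a real number. -/
def cbrt (y : ℝ) : ℝ := if 0 ≤ y then y ^ ((1 : ℝ)/3) else -((-y) ^ ((1 : ℝ)/3))

/-- Functions of `(x, u, p, q)`. -/
abbrev Fn : Type := ℝ → ℝ → ℝ → ℝ → ℝ

/-- Functions of `(x, u, p)`. -/
abbrev Fn3 : Type := ℝ → ℝ → ℝ → ℝ

/-- Partial derivative in `x` of a function of `(x,u,p,q)`. -/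
def pdx (g : Fn) : Fn := fun x u p q => deriv (fun t => g t u p q) x
/-- Partial derivative in `u` of a function of `(x,u,p,q)`. -/
def pdu (g : Fn) : Fn := fun x u p q => deriv (fun t => g x t p q) u
/-- Partial derivative in `p` of a function of `(x,u,p,q)`. -/
def pdp (g : Fn) : Fn := fun x u p q => deriv (fun t => g x u t q) p
/-- Partial derivative in `q` of a function of `(x,u,p,q)`. -/
def pdq (g : Fn) : Fn := fun x u p q => deriv (fun t => g x u p t) q

/-- Partial derivative in `x` of a function of `(x,u,p)`. -/
def pdx3 (g : Fn3) : Fn3 := fun x u p => deriv (fun t => g t u p) x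
/-- Partial derivative in `u` of a function of `(x,u,p)`. -/
def pdu3 (g : Fn3) : Fn3 := fun x u p => deriv (fun t => g x t p) u
/-- Partial derivative in `p` of a function of `(x,u,p)`. -/
def pdp3 (g : Fn3) : Fn3 := fun x u p => deriv (fun t => g x u t) p

/-- Lift of a function of `(x,u,p)` to a function of `(x,u,p,q)`, constant in `q`. -/
def lift (g : Fn3) : Fn := fun x u p _ => g x u p

/-- The total derivative operator `D̂ₓ = ∂ₓ + p ∂ᵤ + q ∂ₚ + f ∂_q` of the ODE `u''' = f`. -/
def Dhat (f g : Fn) : Fn := fun x u p q =>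
  pdx g x u p q + p * pdu g x u p q + q * pdp g x u p q + f x u p q * pdq g x u p q

/-- `I₁ = −f_q`. -/
def I1 (f : Fn) : Fn := fun x u p q => -(pdq f x u p q)

/-- `I₂ = −(2/9)I₁² − f_p − (1/3)D̂ₓI₁`. -/
def I2 (f : Fn) : Fn := fun x u p q =>
  -(2/9) * (I1 f x u p q)^2 - pdp f x u p q - (1/3) * Dhat f (I1 f) x u p q

/-- `I₃ = −(1/3)I₁I₂ − f_u − (1/2)D̂ₓI₂`. -/
def I3 (f : Fn) : Fn := fun x u p q =>
  -(1/3) * I1 f x u p q * I2 f x u p q - pdu f x u p q - (1/2) * Dhat f (I2 f) x u p q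

/-- `J₃`, the real cube root of `I₃`. -/
def J3 (f : Fn) : Fn := fun x u p q => cbrt (I3 f x u p q)

/-- `I₄ = (J₃)_q`. -/
def I4 (f : Fn) : Fn := pdq (J3 f)

/-- `I₅ = (1/(3J₃²))(I₁J₃ + 3D̂ₓJ₃)`. -/
def I5 (f : Fn) : Fn := fun x u p q =>
  (1 / (3 * (J3 f x u p q)^2)) * (I1 f x u p q * J3 f x u p q + 3 * Dhat f (J3 f) x u p q)

/-- `I₇ = −(I₅)_q J₃²`. -/
def I7 (f : Fn) : Fn := fun x u p q => -(pdq (I5 f) x u p q) * (J3 f x u p q)^2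

/-- `I₉ = 2J₃D̂ₓI₅ − I₂ + J₃²I₅²`. -/
def I9 (f : Fn) : Fn := fun x u p q =>
  2 * J3 f x u p q * Dhat f (I5 f) x u p q - I2 f x u p q
    + (J3 f x u p q)^2 * (I5 f x u p q)^2

/-- `K = I₉/J₃²`. -/
def Kinv (f : Fn) : Fn := fun x u p q => I9 f x u p q / (J3 f x u p q)^2

/-- `Q = −(I₁I₇ + 3J₃²(I₅)_p + 3(J₃)_u − 3J₃I₄D̂ₓI₅)/(3J₃)`. -/
def Qinv (f : Fn) : Fn := fun x u p q =>
  -(I1 f x u p q * I7 f x u p q + 3 * (J3 f x u p q)^2 * pdp (I5 f) x u p q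
      + 3 * pdu (J3 f) x u p q
      - 3 * J3 f x u p q * I4 f x u p q * Dhat f (I5 f) x u p q)
    / (3 * J3 f x u p q)

/-- `I₆ = (2/3)(J₃)_q I₁ − (1/3)(I₁)_q J₃ − 2(J₃)_p + 2J₃I₄I₅`. -/
def I6 (f : Fn) : Fn := fun x u p q =>
  (2/3) * pdq (J3 f) x u p q * I1 f x u p q - (1/3) * pdq (I1 f) x u p q * J3 f x u p q
    - 2 * pdp (J3 f) x u p q + 2 * J3 f x u p q * I4 f x u p q * I5 f x u p q

/-- `I₈ = (I₄)_q`. -/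
def I8 (f : Fn) : Fn := pdq (I4 f)

/-- `I₁₀ = I₄D̂ₓI₇ − J₃(I₇)_p + J₃²(I₄/J₃)_u`. -/
def I10 (f : Fn) : Fn := fun x u p q =>
  I4 f x u p q * Dhat f (I7 f) x u p q - J3 f x u p q * pdp (I7 f) x u p q
    + (J3 f x u p q)^2 *
      pdu (fun x' u' p' q' => I4 f x' u' p' q' / J3 f x' u' p' q') x u p q

/-- `I₁₁ = (J₃)_u − D̂ₓI₇`. -/
def I11 (f : Fn) : Fn := fun x u p q =>
  pdu (J3 f) x u p q - Dhat f (I7 f) x u p q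

/-- `I₁₂`. -/
def I12 (f : Fn) : Fn := fun x u p q =>
  6 * I1 f x u p q * J3 f x u p q *
      (I5 f x u p q * I7 f x u p q - I4 f x u p q * Dhat f (I5 f) x u p q)
    - 18 * (J3 f x u p q)^3 * I4 f x u p q
    + 6 * pdp (I5 f) x u p q * I1 f x u p q * (J3 f x u p q)^2
    - 18 * I2 f x u p q * J3 f x u p q * I4 f x u p q * I5 f x u p q
    - 18 * J3 f x u p q * I7 f x u p q * Dhat f (I5 f) x u p q
    + 18 * (J3 f x u p q)^2 * pdu (I5 f) x u p q
    + 18 * I2 f x u p q * Dhat f (I4 f) x u p q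
    + 2 * (I1 f x u p q)^2 * I7 f x u p q
    - 9 * pdp (I2 f) x u p q * J3 f x u p q
    + 6 * (J3 f x u p q)^2 *
        pdu (fun x' u' p' q' => I1 f x' u' p' q' / J3 f x' u' p' q') x u p q
    + 36 * I2 f x u p q * I7 f x u p q

/-- `I₁₃ = (J₃I₄I₅ − I₇)D̂ₓK + J₃K_u − J₃²I₅K_p`. -/
def I13 (f : Fn) : Fn := fun x u p q =>
  (J3 f x u p q * I4 f x u p q * I5 f x u p q - I7 f x u p q) * Dhat f (Kinv f) x u p q
    + J3 f x u p q * pdu (Kinv f) x u p q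
    - (J3 f x u p q)^2 * I5 f x u p q * pdp (Kinv f) x u p q

/-- `I₁₄ = K_q`. -/
def I14 (f : Fn) : Fn := pdq (Kinv f)

/-- `I₁₅ = I₄D̂ₓK − J₃K_p`. -/
def I15 (f : Fn) : Fn := fun x u p q =>
  I4 f x u p q * Dhat f (Kinv f) x u p q - J3 f x u p q * pdp (Kinv f) x u p q

/-- The Jacobian determinant of the map `(x,u,p) ↦ (φ, ψ, χ)`. -/
def jac3 (φ ψ χ : Fn3) : Fn3 := fun x u p =>
  Matrix.det !![pdx3 φ x u p, pdu3 φ x u p, pdp3 φ x u p;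
                pdx3 ψ x u p, pdu3 ψ x u p, pdp3 ψ x u p;
                pdx3 χ x u p, pdu3 χ x u p, pdp3 χ x u p]

/-- A contact transformation `(x̄,ū,p̄) = (φ(x,u,p), ψ(x,u,p), χ(x,u,p))` on an open set
`U ⊆ ℝ³`: a smooth map with nowhere-vanishing Jacobian determinant, together with a
nowhere-vanishing contact multiplier `lam` such that `dψ − χ dφ = lam (du − p dx)`. -/
structure IsContactTransformOn (U : Set (ℝ × ℝ × ℝ)) (φ ψ χ lam : Fn3) : Prop where
  isOpen : IsOpen U
  smooth : ContDiffOn ℝ (⊤ : ℕ∞) (fun v : ℝ × ℝ × ℝ =>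
      (φ v.1 v.2.1 v.2.2, ψ v.1 v.2.1 v.2.2, χ v.1 v.2.1 v.2.2)) U
  jac_ne : ∀ x u p, (x, u, p) ∈ U → jac3 φ ψ χ x u p ≠ 0
  lam_ne : ∀ x u p, (x, u, p) ∈ U → lam x u p ≠ 0
  contact_p : ∀ x u p, (x, u, p) ∈ U → pdp3 ψ x u p - χ x u p * pdp3 φ x u p = 0
  contact_u : ∀ x u p, (x, u, p) ∈ U → pdu3 ψ x u p - χ x u p * pdu3 φ x u p = lam x u p
  contact_x : ∀ x u p, (x, u, p) ∈ U → pdx3 ψ x u p - χ x u p * pdx3 φ x u p = -p * lam x u p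

/-- `u` is a smooth solution of the third-order ODE `u''' = f(x,u,u',u'')` on `I`. -/
def SolvesODE3 (f : Fn) (I : Set ℝ) (u : ℝ → ℝ) : Prop :=
  ContDiffOn ℝ (⊤ : ℕ∞) u I ∧
  ∀ x ∈ I, deriv (deriv (deriv u)) x = f x (u x) (deriv u x) (deriv (deriv u) x)

/-- The ODE `u''' = f(x,u,u',u'')` is equivalent to `ū''' = f̄(x̄,ū,ū',ū'')` under the
contact transformation `(φ, ψ, χ)` on `U`: for every smooth solution `u` of the first
equation, defined on an open interval, whose prolonged graph `(x, u(x), u'(x))` lies in `U`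
and for which `x̄(x) := φ(x,u(x),u'(x))` has nonvanishing derivative, the function `v` of
`x̄` defined by `v(x̄(x)) = ψ(x,u(x),u'(x))` is a smooth solution of the second equation
and satisfies `dv/dx̄ = χ(x,u(x),u'(x))`. -/
def ContactEquivOn (f fbar : Fn) (U : Set (ℝ × ℝ × ℝ)) (φ ψ χ : Fn3) : Prop :=
  ∀ (I : Set ℝ) (u : ℝ → ℝ), IsOpen I → I.OrdConnected →
    SolvesODE3 f I u →
    (∀ x ∈ I, (x, u x, deriv u x) ∈ U) →
    (∀ x ∈ I, deriv (fun t => φ t (u t) (deriv u t)) x ≠ 0) →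
    ∃ v : ℝ → ℝ,
      ContDiffOn ℝ (⊤ : ℕ∞) v ((fun t => φ t (u t) (deriv u t)) '' I) ∧
      (∀ x ∈ I, v (φ x (u x) (deriv u x)) = ψ x (u x) (deriv u x)) ∧
      (∀ x ∈ I, deriv v (φ x (u x) (deriv u x)) = χ x (u x) (deriv u x)) ∧
      (∀ y ∈ (fun t => φ t (u t) (deriv u t)) '' I,
        deriv (deriv (deriv v)) y = fbar y (v y) (deriv v y) (deriv (deriv v) y))

/-- A point transformation `(x̄,ū) = (φ(x,u), ψ(x,u))` on an open set `V ⊆ ℝ²`: a smooth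
map with nowhere-vanishing Jacobian determinant. -/
structure IsPointTransformOn (V : Set (ℝ × ℝ)) (φ ψ : ℝ → ℝ → ℝ) : Prop where
  isOpen : IsOpen V
  smooth : ContDiffOn ℝ (⊤ : ℕ∞) (fun v : ℝ × ℝ => (φ v.1 v.2, ψ v.1 v.2)) V
  jac_ne : ∀ x u, (x, u) ∈ V →
    deriv (fun t => φ t u) x * deriv (fun t => ψ x t) u
      - deriv (fun t => φ x t) u * deriv (fun t => ψ t u) x ≠ 0

/-! ### Auxiliary machinery for the proof of Statement 13 -/

open Set Filter in
private lemma ex1_dummy : True := trivial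

private def d1 (g : ℝ×ℝ → ℝ) : ℝ×ℝ → ℝ := fun z => fderiv ℝ g z (1, 0)
private def d2 (g : ℝ×ℝ → ℝ) : ℝ×ℝ → ℝ := fun z => fderiv ℝ g z (0, 1)

private def P1f (g : ℝ×ℝ→ℝ) (u du : ℝ→ℝ) : ℝ → ℝ := fun x =>
  d1 g (x, u x) + d2 g (x, u x) * du x
private def P2f (g : ℝ×ℝ→ℝ) (u du ddu : ℝ→ℝ) : ℝ → ℝ := fun x =>
  (d1 (d1 g) (x,u x) + d2 (d1 g) (x,u x) * du x)
  + ((d1 (d2 g) (x,u x) + d2 (d2 g) (x,u x) * du x) * du x + d2 g (x,u x) * ddu x)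
private def P3v (g : ℝ×ℝ→ℝ) (z0 : ℝ×ℝ) (p q w3 : ℝ) : ℝ :=
  (d1 (d1 (d1 g)) z0 + d2 (d1 (d1 g)) z0 * p)
  + ((d1 (d2 (d1 g)) z0 + d2 (d2 (d1 g)) z0 * p) * p + d2 (d1 g) z0 * q)
  + (((d1 (d1 (d2 g)) z0 + d2 (d1 (d2 g)) z0 * p)
       + (d1 (d2 (d2 g)) z0 + d2 (d2 (d2 g)) z0 * p) * p + d2 (d2 g) z0 * q) * p
     + (d1 (d2 g) z0 + d2 (d2 g) z0 * p) * q)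
  + ((d1 (d2 g) z0 + d2 (d2 g) z0 * p) * q + d2 g z0 * w3)

private lemma chainCR {g : ℝ×ℝ → ℝ} {u : ℝ → ℝ} {x du : ℝ}
    (hg : DifferentiableAt ℝ g (x, u x)) (hu : HasDerivAt u du x) :
    HasDerivAt (fun t => g (t, u t)) (d1 g (x, u x) + d2 g (x, u x) * du) x := by
  have h := hg.hasFDerivAt.comp_hasDerivAt x ((hasDerivAt_id x).prodMk hu)
  refine h.congr_deriv ?_
  have h2 : ((1:ℝ), du) = ((1:ℝ),(0:ℝ)) + du • ((0:ℝ),(1:ℝ)) := by simp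
  simp only [d1, d2]
  rw [h2, map_add, map_smul, smul_eq_mul]
  ring

private lemma chainV {g : ℝ×ℝ → ℝ} {x u : ℝ}
    (hg : DifferentiableAt ℝ g (x, u)) :
    HasDerivAt (fun t => g (x, t)) (d2 g (x, u)) u := by
  have h := hg.hasFDerivAt.comp_hasDerivAt u ((hasDerivAt_const u x).prodMk (hasDerivAt_id u))
  exact h

private lemma smoothD {V : Set (ℝ×ℝ)} (hV : IsOpen V) {g : ℝ×ℝ → ℝ}
    (hg : ContDiffOn ℝ (⊤:ℕ∞) g V) (e : ℝ×ℝ) :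
    ContDiffOn ℝ (⊤:ℕ∞) (fun z => fderiv ℝ g z e) V :=
  (hg.fderiv_of_isOpen hV (by simp)).clm_apply contDiffOn_const

private lemma smoothD1 {V : Set (ℝ×ℝ)} (hV : IsOpen V) {g : ℝ×ℝ → ℝ}
    (hg : ContDiffOn ℝ (⊤:ℕ∞) g V) : ContDiffOn ℝ (⊤:ℕ∞) (d1 g) V := smoothD hV hg _
private lemma smoothD2 {V : Set (ℝ×ℝ)} (hV : IsOpen V) {g : ℝ×ℝ → ℝ}
    (hg : ContDiffOn ℝ (⊤:ℕ∞) g V) : ContDiffOn ℝ (⊤:ℕ∞) (d2 g) V := smoothD hV hg _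

private lemma diffAtOf {V : Set (ℝ×ℝ)} (hV : IsOpen V) {g : ℝ×ℝ → ℝ}
    (hg : ContDiffOn ℝ (⊤:ℕ∞) g V) {z : ℝ×ℝ} (hz : z ∈ V) :
    DifferentiableAt ℝ g z :=
  (hg.differentiableOn (by simp)).differentiableAt (hV.mem_nhds hz)

private lemma image_mem_nhds {X : ℝ→ℝ} {a b x : ℝ} (hx : x ∈ Set.Ioo a b)
    (hc : ContinuousOn X (Set.Ioo a b))
    (hm : StrictMonoOn X (Set.Ioo a b) ∨ StrictAntiOn X (Set.Ioo a b)) :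
    X '' (Set.Ioo a b) ∈ nhds (X x) := by
  obtain ⟨hax, hxb⟩ := hx
  set l := (a + x)/2 with hl
  set r := (x + b)/2 with hr
  have hla : a < l := by simp [hl]; linarith
  have hlx : l < x := by simp [hl]; linarith
  have hxr : x < r := by simp [hr]; linarith
  have hrb : r < b := by simp [hr]; linarith
  have hlI : l ∈ Set.Ioo a b := ⟨hla, by linarith⟩
  have hrI : r ∈ Set.Ioo a b := ⟨by linarith, hrb⟩
  have hxI : x ∈ Set.Ioo a b := ⟨hax, hxb⟩
  have hsub : Set.Icc l r ⊆ Set.Ioo a b := fun y hy =>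
    ⟨lt_of_lt_of_le hla hy.1, lt_of_le_of_lt hy.2 hrb⟩
  have hlr : l ≤ r := by linarith
  have hcc : ContinuousOn X (Set.Icc l r) := hc.mono hsub
  rcases hm with hm | hm
  · have h1 : X l < X x := hm hlI hxI hlx
    have h2 : X x < X r := hm hxI hrI hxr
    have hiv := intermediate_value_Icc hlr hcc
    have hss : Set.Ioo (X l) (X r) ⊆ X '' (Set.Ioo a b) := fun y hy => by
      obtain ⟨t, ht, hty⟩ := hiv ⟨le_of_lt hy.1, le_of_lt hy.2⟩
      exact ⟨t, hsub ht, hty⟩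
    exact Filter.mem_of_superset (Ioo_mem_nhds h1 h2) hss
  · have h1 : X r < X x := hm hxI hrI hxr
    have h2 : X x < X l := hm hlI hxI hlx
    have hiv := intermediate_value_Icc' hlr hcc
    have hss : Set.Ioo (X r) (X l) ⊆ X '' (Set.Ioo a b) := fun y hy => by
      obtain ⟨t, ht, hty⟩ := hiv ⟨le_of_lt hy.1, le_of_lt hy.2⟩
      exact ⟨t, hsub ht, hty⟩
    exact Filter.mem_of_superset (Ioo_mem_nhds h1 h2) hss

private lemma w_exists (α x0 p q : ℝ) (hp : 0 < p) :
    ∃ (S : Set ℝ) (w dw : ℝ → ℝ), IsOpen S ∧ S.OrdConnected ∧ x0 ∈ S ∧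
      (∀ x ∈ S, 0 < w x) ∧ ContDiffOn ℝ (⊤:ℕ∞) w S ∧
      w x0 = p ∧ dw x0 = q ∧
      (∀ x ∈ S, HasDerivAt w (dw x) x) ∧
      (∀ x ∈ S, HasDerivAt dw (α * (dw x)^2 / w x) x) := by
  by_cases hα : α = 1
  · subst hα
    refine ⟨Set.univ, fun x => p * Real.exp ((q/p) * (x - x0)),
      fun x => q * Real.exp ((q/p) * (x - x0)), isOpen_univ, Set.ordConnected_univ,
      trivial, ?_, ?_, by simp, by simp, ?_, ?_⟩
    · intro x _; positivity
    · have hcd : ContDiff ℝ (⊤:ℕ∞) (fun x => p * Real.exp ((q/p) * (x - x0))) := by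
        apply ContDiff.mul contDiff_const
        exact (Real.contDiff_exp).comp (by fun_prop)
      exact hcd.contDiffOn
    · intro x _
      have h1 : HasDerivAt (fun x => (q/p) * (x - x0)) (q/p) x := by
        simpa using (((hasDerivAt_id x).sub_const x0).const_mul (q/p))
      have h2 := (h1.exp).const_mul p
      refine h2.congr_deriv ?_
      field_simp
    · intro x _
      have h1 : HasDerivAt (fun x => (q/p) * (x - x0)) (q/p) x := by
        simpa using (((hasDerivAt_id x).sub_const x0).const_mul (q/p))
      have h2 := (h1.exp).const_mul q
      refine h2.congr_deriv ?_
      have he : Real.exp ((q/p) * (x - x0)) > 0 := Real.exp_pos _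
      field_simp
  · set β : ℝ := 1/(1-α) with hβ
    have h1α : (1:ℝ) - α ≠ 0 := by intro h; apply hα; linarith
    set B : ℝ := p ^ (1-α) with hB
    set K : ℝ := q * (1-α) * p ^ (-α) with hK
    have hBpos : 0 < B := Real.rpow_pos_of_pos hp _
    set S : Set ℝ := {x | 0 < B + K * (x - x0)} with hS
    have hx0S : x0 ∈ S := by simp [hS, hBpos]
    have hSopen : IsOpen S := by
      have hSeq : S = (fun x => B + K * (x - x0)) ⁻¹' (Set.Ioi 0) := rfl
      rw [hSeq]
      exact IsOpen.preimage (by fun_prop) isOpen_Ioi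
    refine ⟨S, fun x => (B + K * (x - x0)) ^ β,
      fun x => (q * p ^ (-α)) * (B + K * (x - x0)) ^ (β - 1),
      hSopen, ?_, hx0S, ?_, ?_, ?_, ?_, ?_, ?_⟩
    · constructor
      intro x hx z hz y hy
      simp only [hS, Set.mem_setOf_eq] at *
      rcases le_or_gt 0 K with hK0 | hK0
      · nlinarith [hy.1]
      · nlinarith [hy.2]
    · intro x hx; exact Real.rpow_pos_of_pos hx _
    · intro x hx
      apply ContDiffAt.contDiffWithinAt
      exact (ContDiffAt.rpow_const_of_ne (by fun_prop) (ne_of_gt hx))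
    · show (B + K * (x0 - x0)) ^ β = p
      simp only [sub_self, mul_zero, add_zero]
      rw [hB, ← Real.rpow_mul (le_of_lt hp)]
      rw [show (1-α) * β = 1 by rw [hβ]; field_simp]
      exact Real.rpow_one p
    · show (q * p ^ (-α)) * (B + K * (x0 - x0)) ^ (β - 1) = q
      simp only [sub_self, mul_zero, add_zero]
      rw [hB, ← Real.rpow_mul (le_of_lt hp)]
      rw [show (1-α) * (β - 1) = α by rw [hβ]; field_simp; ring]
      rw [mul_assoc, ← Real.rpow_add hp]
      simp
    · intro x hx
      have haff : HasDerivAt (fun x => B + K * (x - x0)) K x := by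
        simpa using ((hasDerivAt_id x).sub_const x0).const_mul K |>.const_add B
      have h2 := haff.rpow_const (p := β) (Or.inl (ne_of_gt hx))
      refine h2.congr_deriv ?_
      rw [hK, hβ]
      field_simp
    · intro x hx
      have haff : HasDerivAt (fun x => B + K * (x - x0)) K x := by
        simpa using ((hasDerivAt_id x).sub_const x0).const_mul K |>.const_add B
      have h2 := (haff.rpow_const (p := β - 1) (Or.inl (ne_of_gt hx))).const_mul (q * p ^ (-α))
      refine h2.congr_deriv (Eq.symm ?_)
      set y : ℝ := B + K * (x - x0) with hy
      have hy0 : 0 < y := hx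
      have e1 : (y ^ (β-1))^2 = y ^ (2*β - 2) := by
        rw [← Real.rpow_natCast (y ^ (β-1)) 2, ← Real.rpow_mul (le_of_lt hy0)]
        rw [show (β-1) * (2:ℕ) = 2*β-2 by push_cast; ring]
      have e2 : y ^ (2*β-2) / y ^ β = y ^ (β - 2) := by
        rw [← Real.rpow_sub hy0]
        rw [show 2*β - 2 - β = β - 2 by ring]
      have e3 : y ^ (β-1-1) = y ^ (β-2) := by rw [show β-1-1 = β-2 by ring]
      have hcoef : K * (β - 1) = α * (q * p^(-α)) := by
        rw [hβ, hK]; field_simp; ring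
      calc α * (q * p ^ (-α) * y ^ (β-1))^2 / y^β
          = α * (q*p^(-α))^2 * ((y^(β-1))^2 / y^β) := by ring
        _ = α * (q*p^(-α))^2 * y^(β-2) := by rw [e1, e2]
        _ = q * p^(-α) * (K*(β-1) * y^(β-1-1)) := by rw [e3, hcoef]; ring

private lemma sol_exists (α u0 x0 p q : ℝ) (hp : 0 < p) :
    ∃ (S : Set ℝ) (u du ddu : ℝ → ℝ), IsOpen S ∧ S.OrdConnected ∧ x0 ∈ S ∧
      ContDiffOn ℝ (⊤:ℕ∞) u S ∧ u x0 = u0 ∧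
      (∀ x ∈ S, 0 < du x) ∧ du x0 = p ∧ ddu x0 = q ∧
      (∀ x ∈ S, HasDerivAt u (du x) x) ∧
      (∀ x ∈ S, HasDerivAt du (ddu x) x) ∧
      (∀ x ∈ S, HasDerivAt ddu (α * (ddu x)^2 / du x) x) := by
  obtain ⟨S, w, dw, hSo, hSc, hx0, hwpos, hwsm, hwx0, hdwx0, hdw, hddw⟩ :=
    w_exists α x0 p q hp
  set u : ℝ → ℝ := fun x => u0 + ∫ t in x0..x, w t with hu
  have hwcont : ContinuousOn w S := hwsm.continuousOn
  have hud : ∀ x ∈ S, HasDerivAt u (w x) x := by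
    intro x hx
    have hint : IntervalIntegrable w MeasureTheory.volume x0 x := by
      apply ContinuousOn.intervalIntegrable
      exact hwcont.mono (hSc.uIcc_subset hx0 hx)
    have hmeas := hwcont.stronglyMeasurableAtFilter (μ := MeasureTheory.volume) hSo x hx
    have hca : ContinuousAt w x := (hwcont.continuousAt (hSo.mem_nhds hx))
    exact (intervalIntegral.integral_hasDerivAt_right hint hmeas hca).const_add u0
  refine ⟨S, u, w, dw, hSo, hSc, hx0, ?_, ?_, hwpos, hwx0, hdwx0, hud, hdw, hddw⟩
  · rw [contDiffOn_infty_iff_deriv_of_isOpen hSo]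
    constructor
    · exact fun x hx => (hud x hx).differentiableAt.differentiableWithinAt
    · exact hwsm.congr (fun x hx => (hud x hx).deriv)
  · simp [hu]
private lemma key
    {V : Set (ℝ×ℝ)} (hV : IsOpen V)
    {g h : ℝ×ℝ → ℝ}
    (hg : ContDiffOn ℝ (⊤:ℕ∞) g V) (hh : ContDiffOn ℝ (⊤:ℕ∞) h V)
    {I : Set ℝ} (hI : IsOpen I) {x0 : ℝ} (hx0 : x0 ∈ I)
    {u du ddu : ℝ → ℝ}
    (hγ : ∀ x ∈ I, (x, u x) ∈ V)
    (hdu : ∀ x ∈ I, HasDerivAt u (du x) x)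
    (hddu : ∀ x ∈ I, HasDerivAt du (ddu x) x)
    {w3 : ℝ} (hdddu : HasDerivAt ddu w3 x0)
    {v : ℝ → ℝ} {s : ℝ}
    (hvs : ContDiffOn ℝ (⊤:ℕ∞) v ((fun x => g (x, u x)) '' I))
    (hveq : ∀ x ∈ I, v (g (x, u x)) = h (x, u x))
    (hvode : ∀ y ∈ (fun x => g (x, u x)) '' I,
       deriv (deriv (deriv v)) y = s * deriv v y + v y)
    (himg : ∀ x ∈ I, (fun x => g (x, u x)) '' I ∈ nhds (g (x, u x))) :
    ∃ c1 c2 : ℝ,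
      P1f h u du x0 = c1 * P1f g u du x0 ∧
      P2f h u du ddu x0 = c2 * (P1f g u du x0)^2 + c1 * P2f g u du ddu x0 ∧
      P3v h (x0, u x0) (du x0) (ddu x0) w3
        = (s * c1 + h (x0, u x0)) * (P1f g u du x0)^3
          + 3 * c2 * (P1f g u du x0) * (P2f g u du ddu x0)
          + c1 * P3v g (x0, u x0) (du x0) (ddu x0) w3 := by
  set X : ℝ → ℝ := fun x => g (x, u x) with hX
  -- first and second derivative chains for g and h along the curve
  have hP1 : ∀ (f : ℝ×ℝ → ℝ), ContDiffOn ℝ (⊤:ℕ∞) f V →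
      ∀ x ∈ I, HasDerivAt (fun t => f (t, u t)) (P1f f u du x) x := by
    intro f hf x hx
    exact chainCR (diffAtOf hV hf (hγ x hx)) (hdu x hx)
  have hP2 : ∀ (f : ℝ×ℝ → ℝ), ContDiffOn ℝ (⊤:ℕ∞) f V →
      ∀ x ∈ I, HasDerivAt (P1f f u du) (P2f f u du ddu x) x := by
    intro f hf x hx
    have h1 := chainCR (diffAtOf hV (smoothD1 hV hf) (hγ x hx)) (hdu x hx)
    have h2 := chainCR (diffAtOf hV (smoothD2 hV hf) (hγ x hx)) (hdu x hx)
    have h3 := h1.add (h2.mul (hddu x hx))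
    exact h3
  have hP3 : ∀ (f : ℝ×ℝ → ℝ), ContDiffOn ℝ (⊤:ℕ∞) f V →
      HasDerivAt (P2f f u du ddu) (P3v f (x0, u x0) (du x0) (ddu x0) w3) x0 := by
    intro f hf
    have hz0 := hγ x0 hx0
    have h11 := chainCR (diffAtOf hV (smoothD1 hV (smoothD1 hV hf)) hz0) (hdu x0 hx0)
    have h12 := chainCR (diffAtOf hV (smoothD2 hV (smoothD1 hV hf)) hz0) (hdu x0 hx0)
    have h21 := chainCR (diffAtOf hV (smoothD1 hV (smoothD2 hV hf)) hz0) (hdu x0 hx0)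
    have h22 := chainCR (diffAtOf hV (smoothD2 hV (smoothD2 hV hf)) hz0) (hdu x0 hx0)
    have h2x := chainCR (diffAtOf hV (smoothD2 hV hf) hz0) (hdu x0 hx0)
    have hbig := (h11.add (h12.mul (hddu x0 hx0))).add
      (((h21.add (h22.mul (hddu x0 hx0))).mul (hddu x0 hx0)).add
        (h2x.mul hdddu))
    refine hbig.congr_deriv ?_
    simp only [P3v, Pi.add_apply, Pi.mul_apply]
    ring
  -- v side
  set W : Set ℝ := interior (X '' I) with hW
  have hXW : ∀ x ∈ I, X x ∈ W := fun x hx => mem_interior_iff_mem_nhds.mpr (himg x hx)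
  have hvW : ContDiffOn ℝ (⊤:ℕ∞) v W := hvs.mono interior_subset
  obtain ⟨hv_d, hdv_sm⟩ := (contDiffOn_infty_iff_deriv_of_isOpen isOpen_interior).mp hvW
  obtain ⟨hdv_d, hddv_sm⟩ := (contDiffOn_infty_iff_deriv_of_isOpen isOpen_interior).mp hdv_sm
  obtain ⟨hddv_d, _⟩ := (contDiffOn_infty_iff_deriv_of_isOpen isOpen_interior).mp hddv_sm
  have hvda : ∀ x ∈ I, HasDerivAt v (deriv v (X x)) (X x) := fun x hx =>
    (hv_d.differentiableAt (isOpen_interior.mem_nhds (hXW x hx))).hasDerivAt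
  have hdvda : ∀ x ∈ I, HasDerivAt (deriv v) (deriv (deriv v) (X x)) (X x) := fun x hx =>
    (hdv_d.differentiableAt (isOpen_interior.mem_nhds (hXW x hx))).hasDerivAt
  have hddvda : HasDerivAt (deriv (deriv v)) (deriv (deriv (deriv v)) (X x0)) (X x0) :=
    (hddv_d.differentiableAt (isOpen_interior.mem_nhds (hXW x0 hx0))).hasDerivAt
  -- first chain identity
  have hE1 : ∀ x ∈ I, P1f h u du x = deriv v (X x) * P1f g u du x := by
    intro x hx
    have hcomp : HasDerivAt (fun t => v (X t)) (deriv v (X x) * P1f g u du x) x :=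
      (hvda x hx).comp x (hP1 g hg x hx)
    have hev : (fun t => h (t, u t)) =ᶠ[nhds x] (fun t => v (X t)) :=
      Filter.eventually_of_mem (hI.mem_nhds hx) (fun t ht => (hveq t ht).symm)
    exact (hP1 h hh x hx).unique (hcomp.congr_of_eventuallyEq hev)
  -- second chain identity
  have hE2 : ∀ x ∈ I, P2f h u du ddu x
      = (deriv (deriv v) (X x) * P1f g u du x) * P1f g u du x
        + deriv v (X x) * P2f g u du ddu x := by
    intro x hx
    have hcomp2 : HasDerivAt (fun t => deriv v (X t))
        (deriv (deriv v) (X x) * P1f g u du x) x := (hdvda x hx).comp x (hP1 g hg x hx)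
    have hrhs : HasDerivAt (fun t => deriv v (X t) * P1f g u du t)
        ((deriv (deriv v) (X x) * P1f g u du x) * P1f g u du x
          + deriv v (X x) * P2f g u du ddu x) x := hcomp2.mul (hP2 g hg x hx)
    have hev : (P1f h u du) =ᶠ[nhds x] (fun t => deriv v (X t) * P1f g u du t) :=
      Filter.eventually_of_mem (hI.mem_nhds hx) (fun t ht => hE1 t ht)
    exact (hP2 h hh x hx).unique (hrhs.congr_of_eventuallyEq hev)
  -- third chain identity at x0
  have hE3 : P3v h (x0, u x0) (du x0) (ddu x0) w3
      = ((deriv (deriv (deriv v)) (X x0) * P1f g u du x0) * P1f g u du x0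
           + deriv (deriv v) (X x0) * P2f g u du ddu x0) * P1f g u du x0
        + (deriv (deriv v) (X x0) * P1f g u du x0) * P2f g u du ddu x0
        + ((deriv (deriv v) (X x0) * P1f g u du x0) * P2f g u du ddu x0
           + deriv v (X x0) * P3v g (x0, u x0) (du x0) (ddu x0) w3) := by
    have hcomp3 : HasDerivAt (fun t => deriv (deriv v) (X t))
        (deriv (deriv (deriv v)) (X x0) * P1f g u du x0) x0 :=
      hddvda.comp x0 (hP1 g hg x0 hx0)
    have hcomp2 : HasDerivAt (fun t => deriv v (X t))
        (deriv (deriv v) (X x0) * P1f g u du x0) x0 := (hdvda x0 hx0).comp x0 (hP1 g hg x0 hx0)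
    have hrhs : HasDerivAt
        (fun t => (deriv (deriv v) (X t) * P1f g u du t) * P1f g u du t
          + deriv v (X t) * P2f g u du ddu t)
        (((deriv (deriv (deriv v)) (X x0) * P1f g u du x0) * P1f g u du x0
           + deriv (deriv v) (X x0) * P2f g u du ddu x0) * P1f g u du x0
        + (deriv (deriv v) (X x0) * P1f g u du x0) * P2f g u du ddu x0
        + ((deriv (deriv v) (X x0) * P1f g u du x0) * P2f g u du ddu x0
           + deriv v (X x0) * P3v g (x0, u x0) (du x0) (ddu x0) w3)) x0 := by
      have ha := (hcomp3.mul (hP2 g hg x0 hx0)).mul (hP2 g hg x0 hx0)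
      have hb := hcomp2.mul (hP3 g hg)
      have hc := ha.add hb
      refine hc.congr_deriv ?_
      simp only [Pi.mul_apply]
    have hev : (P2f h u du ddu) =ᶠ[nhds x0]
        (fun t => (deriv (deriv v) (X t) * P1f g u du t) * P1f g u du t
          + deriv v (X t) * P2f g u du ddu t) :=
      Filter.eventually_of_mem (hI.mem_nhds hx0) (fun t ht => hE2 t ht)
    exact (hP3 h hh).unique (hrhs.congr_of_eventuallyEq hev)
  refine ⟨deriv v (X x0), deriv (deriv v) (X x0), hE1 x0 hx0, ?_, ?_⟩
  · rw [hE2 x0 hx0]; ring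
  · rw [hE3]
    have hode := hvode (X x0) ⟨x0, hx0, rfl⟩
    have hval : v (X x0) = h (x0, u x0) := hveq x0 hx0
    rw [hode, hval]
    ring


private lemma algebra_step (a1 a2 b1 b2 Sa Sb Ta Tb Ra Rb s h0 α p : ℝ)
    (hp : p ≠ 0) (hA : a1 + a2*p ≠ 0) (hJ : a1*b2 - a2*b1 ≠ 0)
    (c10 c20 c11 c21 c1m c2m w30 w31 w3m : ℝ)
    (hw30 : p*w30 = α*0^2) (hw31 : p*w31 = α*1^2) (hw3m : p*w3m = α*(-1)^2)
    (e10 : b1 + b2*p = c10*(a1+a2*p))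
    (e11 : b1 + b2*p = c11*(a1+a2*p))
    (e1m : b1 + b2*p = c1m*(a1+a2*p))
    (e20 : Sb + b2*0 = c20*(a1+a2*p)^2 + c10*(Sa + a2*0))
    (e21 : Sb + b2*1 = c21*(a1+a2*p)^2 + c11*(Sa + a2*1))
    (e2m : Sb + b2*(-1) = c2m*(a1+a2*p)^2 + c1m*(Sa + a2*(-1)))
    (e30 : Tb + Rb*0 + b2*w30 = (s*c10 + h0)*(a1+a2*p)^3
      + 3*c20*(a1+a2*p)*(Sa+a2*0) + c10*(Ta + Ra*0 + a2*w30))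
    (e31 : Tb + Rb*1 + b2*w31 = (s*c11 + h0)*(a1+a2*p)^3
      + 3*c21*(a1+a2*p)*(Sa+a2*1) + c11*(Ta + Ra*1 + a2*w31))
    (e3m : Tb + Rb*(-1) + b2*w3m = (s*c1m + h0)*(a1+a2*p)^3
      + 3*c2m*(a1+a2*p)*(Sa+a2*(-1)) + c1m*(Ta + Ra*(-1) + a2*w3m)) :
    α*(a1+a2*p) = 3*p*a2 := by
  have hc11 : c11 = c10 := mul_right_cancel₀ hA (e11.symm.trans e10)
  have hc1m : c1m = c10 := mul_right_cancel₀ hA (e1m.symm.trans e10)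
  rw [hc11] at e21 e31
  rw [hc1m] at e2m e3m
  have hT : (a1*b2 - a2*b1)*(α*(a1+a2*p) - 3*p*a2) = 0 := by
    linear_combination (p/2)*(a1+a2*p)^2*e31 + (p/2)*(a1+a2*p)^2*e3m
      - p*(a1+a2*p)^2*e30
      - (3*p*(a1+a2*p)/2)*Sa*e21 - (3*p*(a1+a2*p)/2)*Sa*e2m + 3*p*(a1+a2*p)*Sa*e20
      - (3*p*(a1+a2*p)/2)*a2*e21 + (3*p*(a1+a2*p)/2)*a2*e2m
      - (α*(a1+a2*p) - 3*p*a2)*a2*e10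
      - ((a1+a2*p)^2/2)*(b2 - c10*a2)*hw31
      - ((a1+a2*p)^2/2)*(b2 - c10*a2)*hw3m
      + (a1+a2*p)^2*(b2 - c10*a2)*hw30
  rcases mul_eq_zero.mp hT with h | h
  · exact absurd h hJ
  · linarith

/-- (Remark 4.1.)  For `α(α−3)(2α−3) ≠ 0`, `m` the real cube root of
`2α³−9α²+9α`, `s = (3α²−9α+9)/m²`, there is no point transformation on any nonempty open
set `V ⊆ ℝ²` under which `u''' = α(u'')²/u'` is equivalent to `ū''' = s·ū' + ū`: for
every such `V` and point transformation there is a smooth solution `u` of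
`u''' = α(u'')²/u'` with `u' ≠ 0`, graph in `V`, and `(φ(x,u(x)))' ≠ 0`, whose transform
fails to solve `ū''' = s·ū' + ū`. -/
theorem example1_not_point_linearizable (α m s : ℝ)
    (hα : α * (α - 3) * (2*α - 3) ≠ 0)
    (hm : m = cbrt (2*α^3 - 9*α^2 + 9*α))
    (hs : s = (3*α^2 - 9*α + 9) / m^2) :
    ∀ (V : Set (ℝ × ℝ)), V.Nonempty →
      ∀ φ ψ : ℝ → ℝ → ℝ, IsPointTransformOn V φ ψ →
        ∃ (I : Set ℝ) (u : ℝ → ℝ),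
          IsOpen I ∧ I.OrdConnected ∧ I.Nonempty ∧
          SolvesODE3 (fun _ _ p' q' => α * q'^2 / p') I u ∧
          (∀ x ∈ I, deriv u x ≠ 0) ∧
          (∀ x ∈ I, (x, u x) ∈ V) ∧
          (∀ x ∈ I, deriv (fun t => φ t (u t)) x ≠ 0) ∧
          ¬∃ v : ℝ → ℝ,
              ContDiffOn ℝ (⊤ : ℕ∞) v ((fun t => φ t (u t)) '' I) ∧
              (∀ x ∈ I, v (φ x (u x)) = ψ x (u x)) ∧
              (∀ y ∈ (fun t => φ t (u t)) '' I,
                deriv (deriv (deriv v)) y = s * deriv v y + v y) := by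
  intro V hVne φ ψ hpt
  by_contra hcon
  push_neg at hcon
  obtain ⟨⟨x0, u0⟩, hz0⟩ := hVne
  have hV : IsOpen V := hpt.isOpen
  set g : ℝ×ℝ → ℝ := fun z => φ z.1 z.2 with hgdef
  set h : ℝ×ℝ → ℝ := fun z => ψ z.1 z.2 with hhdef
  have hgsm : ContDiffOn ℝ (⊤:ℕ∞) g V :=
    (contDiff_fst.comp_contDiffOn hpt.smooth : ContDiffOn ℝ (⊤:ℕ∞) _ V)
  have hhsm : ContDiffOn ℝ (⊤:ℕ∞) h V :=
    (contDiff_snd.comp_contDiffOn hpt.smooth : ContDiffOn ℝ (⊤:ℕ∞) _ V)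
  -- Jacobian at the base point
  have hJ : d1 g (x0,u0) * d2 h (x0,u0) - d2 g (x0,u0) * d1 h (x0,u0) ≠ 0 := by
    have h1 : deriv (fun t => φ t u0) x0 = d1 g (x0,u0) := by
      have hd := chainCR (u := fun _ => u0) (diffAtOf hV hgsm hz0) (hasDerivAt_const x0 u0)
      simpa using hd.deriv
    have h2 : deriv (fun t => ψ x0 t) u0 = d2 h (x0,u0) := by
      have hd := chainV (g := h) (x := x0) (u := u0) (diffAtOf hV hhsm hz0)
      exact hd.deriv
    have h3 : deriv (fun t => φ x0 t) u0 = d2 g (x0,u0) := by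
      have hd := chainV (g := g) (x := x0) (u := u0) (diffAtOf hV hgsm hz0)
      exact hd.deriv
    have h4 : deriv (fun t => ψ t u0) x0 = d1 h (x0,u0) := by
      have hd := chainCR (u := fun _ => u0) (diffAtOf hV hhsm hz0) (hasDerivAt_const x0 u0)
      simpa using hd.deriv
    have hj := hpt.jac_ne x0 u0 hz0
    rw [h1, h2, h3, h4] at hj
    exact hj
  -- the master construction
  have master : ∀ p q : ℝ, 0 < p → d1 g (x0,u0) + d2 g (x0,u0)*p ≠ 0 →
      ∃ c1 c2 w3 : ℝ, p*w3 = α*q^2 ∧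
        (d1 h (x0,u0) + d2 h (x0,u0)*p = c1*(d1 g (x0,u0) + d2 g (x0,u0)*p)) ∧
        ((d1 (d1 h) (x0,u0) + d2 (d1 h) (x0,u0)*p + (d1 (d2 h) (x0,u0) + d2 (d2 h) (x0,u0)*p)*p)
            + d2 h (x0,u0)*q
          = c2*(d1 g (x0,u0) + d2 g (x0,u0)*p)^2
            + c1*((d1 (d1 g) (x0,u0) + d2 (d1 g) (x0,u0)*p
                    + (d1 (d2 g) (x0,u0) + d2 (d2 g) (x0,u0)*p)*p) + d2 g (x0,u0)*q)) ∧
        (((d1 (d1 (d1 h)) (x0,u0) + d2 (d1 (d1 h)) (x0,u0)*p)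
            + (d1 (d2 (d1 h)) (x0,u0) + d2 (d2 (d1 h)) (x0,u0)*p)*p
            + ((d1 (d1 (d2 h)) (x0,u0) + d2 (d1 (d2 h)) (x0,u0)*p)
                + (d1 (d2 (d2 h)) (x0,u0) + d2 (d2 (d2 h)) (x0,u0)*p)*p)*p)
            + (d2 (d1 h) (x0,u0) + 2*d1 (d2 h) (x0,u0) + 3*d2 (d2 h) (x0,u0)*p)*q
            + d2 h (x0,u0)*w3
          = (s*c1 + h (x0,u0))*(d1 g (x0,u0) + d2 g (x0,u0)*p)^3
            + 3*c2*(d1 g (x0,u0) + d2 g (x0,u0)*p)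
               *((d1 (d1 g) (x0,u0) + d2 (d1 g) (x0,u0)*p
                    + (d1 (d2 g) (x0,u0) + d2 (d2 g) (x0,u0)*p)*p) + d2 g (x0,u0)*q)
            + c1*(((d1 (d1 (d1 g)) (x0,u0) + d2 (d1 (d1 g)) (x0,u0)*p)
                    + (d1 (d2 (d1 g)) (x0,u0) + d2 (d2 (d1 g)) (x0,u0)*p)*p
                    + ((d1 (d1 (d2 g)) (x0,u0) + d2 (d1 (d2 g)) (x0,u0)*p)
                        + (d1 (d2 (d2 g)) (x0,u0) + d2 (d2 (d2 g)) (x0,u0)*p)*p)*p)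
                   + (d2 (d1 g) (x0,u0) + 2*d1 (d2 g) (x0,u0) + 3*d2 (d2 g) (x0,u0)*p)*q
                   + d2 g (x0,u0)*w3)) := by
    intro p q hp hA
    obtain ⟨S, u, du, ddu, hSo, hSc, hx0S, husm, hux0, hdupos, hdux0, hddux0, hud, hdud, hddud⟩ :=
      sol_exists α u0 x0 p q hp
    have hucont : ContinuousOn u S := fun x hx => (hud x hx).continuousAt.continuousWithinAt
    have hducont : ContinuousOn du S := fun x hx => (hdud x hx).continuousAt.continuousWithinAt
    have hγcont : ContinuousOn (fun x => (x, u x)) S := continuousOn_id.prodMk hucont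
    have hγx0 : (x0, u x0) = ((x0, u0) : ℝ×ℝ) := by rw [hux0]
    set O1 : Set ℝ := S ∩ (fun x => (x, u x)) ⁻¹' V with hO1def
    have hO1o : IsOpen O1 := hγcont.isOpen_inter_preimage hSo hV
    have hx0O1 : x0 ∈ O1 := ⟨hx0S, by simp only [Set.mem_preimage, hγx0]; exact hz0⟩
    set Q1 : ℝ → ℝ := P1f g u du with hQ1def
    have hQ1cont : ContinuousOn Q1 O1 := by
      apply ContinuousOn.add
      · exact (smoothD1 hV hgsm).continuousOn.comp
          (hγcont.mono Set.inter_subset_left) (fun x hx => hx.2)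
      · exact ContinuousOn.mul
          ((smoothD2 hV hgsm).continuousOn.comp
            (hγcont.mono Set.inter_subset_left) (fun x hx => hx.2))
          (hducont.mono Set.inter_subset_left)
    have hQ1x0 : Q1 x0 = d1 g (x0,u0) + d2 g (x0,u0)*p := by
      simp only [hQ1def, P1f, hγx0, hdux0]
    set A : ℝ := d1 g (x0,u0) + d2 g (x0,u0)*p with hAdef
    set O2 : Set ℝ := O1 ∩ Q1 ⁻¹' (Metric.ball A |A|) with hO2def
    have hO2o : IsOpen O2 := hQ1cont.isOpen_inter_preimage hO1o Metric.isOpen_ball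
    have hx0O2 : x0 ∈ O2 := by
      refine ⟨hx0O1, ?_⟩
      simp only [Set.mem_preimage, Metric.mem_ball, hQ1x0, ← hAdef, dist_self]
      try exact abs_pos.mpr hA
    obtain ⟨ε, hεpos, hball⟩ := Metric.isOpen_iff.mp hO2o x0 hx0O2
    set I : Set ℝ := Set.Ioo (x0-ε) (x0+ε) with hIdef
    have hIsub : I ⊆ O2 := by rw [hIdef, ← Real.ball_eq_Ioo]; exact hball
    have hIo : IsOpen I := isOpen_Ioo
    have hx0I : x0 ∈ I := by
      rw [hIdef]; constructor <;> [linarith; linarith]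
    have hIS : ∀ x ∈ I, x ∈ S := fun x hx => (hIsub hx).1.1
    have hIV : ∀ x ∈ I, (x, u x) ∈ V := fun x hx => (hIsub hx).1.2
    have hQ1near : ∀ x ∈ I, |Q1 x - A| < |A| := by
      intro x hx
      have := (hIsub hx).2
      simpa [Real.dist_eq] using this
    have hQ1ne : ∀ x ∈ I, Q1 x ≠ 0 := by
      intro x hx
      have hn := hQ1near x hx
      intro h0
      rw [h0] at hn
      simp at hn
    have hXd : ∀ x ∈ I, HasDerivAt (fun t => g (t, u t)) (Q1 x) x :=
      fun x hx => chainCR (diffAtOf hV hgsm (hIV x hx)) (hud x (hIS x hx))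
    have hderiv1 : ∀ x ∈ S, deriv u x = du x := fun x hx => (hud x hx).deriv
    have hderiv2 : ∀ x ∈ S, deriv (deriv u) x = ddu x := by
      intro x hx
      have hev : deriv u =ᶠ[nhds x] du :=
        Filter.eventually_of_mem (hSo.mem_nhds hx) (fun t ht => (hud t ht).deriv)
      rw [hev.deriv_eq]
      exact (hdud x hx).deriv
    have hderiv3 : ∀ x ∈ S, deriv (deriv (deriv u)) x = α*(ddu x)^2/(du x) := by
      intro x hx
      have hev : deriv (deriv u) =ᶠ[nhds x] ddu :=
        Filter.eventually_of_mem (hSo.mem_nhds hx) (fun t ht => hderiv2 t ht)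
      rw [hev.deriv_eq]
      exact (hddud x hx).deriv
    have hsol : SolvesODE3 (fun _ _ p' q' => α * q'^2 / p') I u := by
      refine ⟨husm.mono (fun x hx => hIS x hx), ?_⟩
      intro x hx
      rw [hderiv3 x (hIS x hx), hderiv2 x (hIS x hx), hderiv1 x (hIS x hx)]
    have hune : ∀ x ∈ I, deriv u x ≠ 0 := by
      intro x hx
      rw [hderiv1 x (hIS x hx)]
      exact ne_of_gt (hdupos x (hIS x hx))
    have hXne : ∀ x ∈ I, deriv (fun t => φ t (u t)) x ≠ 0 := by
      intro x hx
      have hdX : deriv (fun t => φ t (u t)) x = Q1 x := HasDerivAt.deriv (hXd x hx)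
      rw [hdX]
      exact hQ1ne x hx
    obtain ⟨v, hv1, hv2, hv3⟩ := hcon I u hIo (Set.ordConnected_Ioo) ⟨x0, hx0I⟩
      hsol hune hIV hXne
    -- monotonicity and openness of the image
    have hXcont : ContinuousOn (fun t => g (t, u t)) I :=
      fun x hx => (hXd x hx).continuousAt.continuousWithinAt
    have hmono : StrictMonoOn (fun t => g (t, u t)) I ∨ StrictAntiOn (fun t => g (t, u t)) I := by
      rcases hA.lt_or_gt with hAneg | hApos
      · right
        apply strictAntiOn_of_deriv_neg (convex_Ioo _ _) hXcont
        intro x hx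
        rw [interior_Ioo] at hx
        rw [(hXd x hx).deriv]
        have hnear := hQ1near x hx
        rw [abs_of_neg hAneg] at hnear
        cases abs_cases (Q1 x - A) <;> linarith
      · left
        apply strictMonoOn_of_deriv_pos (convex_Ioo _ _) hXcont
        intro x hx
        rw [interior_Ioo] at hx
        rw [(hXd x hx).deriv]
        have hnear := hQ1near x hx
        rw [abs_of_pos hApos] at hnear
        cases abs_cases (Q1 x - A) <;> linarith
    have himg : ∀ x ∈ I, (fun t => g (t, u t)) '' I ∈ nhds (g (x, u x)) := by
      intro x hx
      exact image_mem_nhds hx hXcont hmono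
    have hdddu_x0 : HasDerivAt ddu (α*q^2/p) x0 := by
      have hd := hddud x0 hx0S
      rwa [hddux0, hdux0] at hd
    obtain ⟨c1, c2, E1, E2, E3⟩ := key hV hgsm hhsm hIo hx0I hIV
      (fun x hx => hud x (hIS x hx)) (fun x hx => hdud x (hIS x hx)) hdddu_x0
      hv1 hv2 hv3 himg
    refine ⟨c1, c2, α*q^2/p, by field_simp, ?_, ?_, ?_⟩
    · simp only [P1f, hγx0, hdux0] at E1
      exact E1
    · simp only [P2f, P1f, hγx0, hdux0, hddux0] at E2
      linear_combination E2
    · simp only [P3v, P2f, P1f, hγx0, hdux0, hddux0] at E3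
      linear_combination E3
  -- Endgame: extract the q^2-coefficient identity for two values of p
  have halg : ∀ p : ℝ, 0 < p → d1 g (x0,u0) + d2 g (x0,u0)*p ≠ 0 →
      α*(d1 g (x0,u0) + d2 g (x0,u0)*p) = 3*p*(d2 g (x0,u0)) := by
    intro p hp hA
    obtain ⟨c10, c20, w30, hw30, e10, e20, e30⟩ := master p 0 hp hA
    obtain ⟨c11, c21, w31, hw31, e11, e21, e31⟩ := master p 1 hp hA
    obtain ⟨c1m, c2m, w3m, hw3m, e1m, e2m, e3m⟩ := master p (-1) hp hA
    exact algebra_step _ _ _ _ _ _ _ _ _ _ s (h (x0,u0)) α p (ne_of_gt hp) hA hJ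
      c10 c20 c11 c21 c1m c2m w30 w31 w3m hw30 hw31 hw3m
      e10 e11 e1m e20 e21 e2m e30 e31 e3m
  -- now derive a contradiction
  have hα0 : α ≠ 0 := by
    intro h0; apply hα; rw [h0]; ring
  have hα3 : α ≠ 3 := by
    intro h3; apply hα; rw [h3]; ring
  set a1 : ℝ := d1 g (x0,u0) with ha1
  set a2 : ℝ := d2 g (x0,u0) with ha2
  by_cases ha2z : a2 = 0
  · have ha1z : a1 ≠ 0 := by
      intro h1; apply hJ; rw [h1, ha2z]; ring
    have hA1 : a1 + a2*1 ≠ 0 := by rw [ha2z]; simpa using ha1z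
    have he := halg 1 one_pos hA1
    rw [ha2z] at he
    simp at he
    rcases he with he | he
    · exact hα0 he
    · exact ha1z he
  · have hex : ∃ p1 p2 : ℝ, 0 < p1 ∧ 0 < p2 ∧ p1 ≠ p2 ∧
        a1 + a2*p1 ≠ 0 ∧ a1 + a2*p2 ≠ 0 := by
      by_cases h1 : a1 + a2*1 = 0
      · refine ⟨2, 3, by norm_num, by norm_num, by norm_num, ?_, ?_⟩
        · intro h2; apply ha2z; nlinarith [h1, h2]
        · intro h3; apply ha2z; nlinarith [h1, h3]
      · by_cases h2 : a1 + a2*2 = 0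
        · refine ⟨1, 3, by norm_num, by norm_num, by norm_num, h1, ?_⟩
          intro h3; apply ha2z; nlinarith [h2, h3]
        · exact ⟨1, 2, by norm_num, by norm_num, by norm_num, h1, h2⟩
    obtain ⟨p1, p2, hp1, hp2, hne, hA1, hA2⟩ := hex
    have he1 := halg p1 hp1 hA1
    have he2 := halg p2 hp2 hA2
    have h3 : α = 3 := by
      have hsub : α*a2*(p1 - p2) = 3*a2*(p1 - p2) := by linarith [he1, he2]
      have hp12 : p1 - p2 ≠ 0 := sub_ne_zero.mpr hne
      have := mul_right_cancel₀ hp12 hsub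
      exact mul_right_cancel₀ ha2z this
    exact hα3 h3

end
end

section
/- There exist no nonempty open set V ⊆ ℝ², no point transformation (x̄,ū) = (φ(x,u), ψ(x,u)) on V, and no smooth nowhere-vanishing function ā with ((2ā·ā″ − 3(ā′)²)/ā⁴)′ ≠ 0, under which the ODE u‴ = −x·(u′)⁴(u″)³ + u·(u′)³(u″)³ is equivalent to the canonical form ū‴ = ā(x̄)³·ū; that is, for every such V, point transformation and ā there is a smooth solution u(x) of the nonlinear equation with u′ ≠ 0, u″ ≠ 0, graph in V, and (d/dx)φ(x,u(x)) ≠ 0, whose transform fails to solve ū‴ = ā(x̄)³ū. -/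
/-!
Invariants of the third-order ODE `u''' = f(x, u, u', u'')` under contact
transformations, following Cartan's equivalence method.
We write `p = u'`, `q = u''`.
-/

noncomputable section

open Set
open scoped ContDiff


/-- first partial of an uncurried function ℝ×ℝ→ℝ -/
def pd1 (G : ℝ × ℝ → ℝ) : ℝ × ℝ → ℝ := fun z => fderiv ℝ G z (1, 0)
def pd2 (G : ℝ × ℝ → ℝ) : ℝ × ℝ → ℝ := fun z => fderiv ℝ G z (0, 1)

theorem pd1_contDiffOn {V : Set (ℝ × ℝ)} (hV : IsOpen V) {G : ℝ × ℝ → ℝ}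
    (hG : ContDiffOn ℝ ∞ G V) : ContDiffOn ℝ ∞ (pd1 G) V := by
  have h : ContDiffOn ℝ ∞ (fderiv ℝ G) V :=
    hG.fderiv_of_isOpen (m := ∞) hV (by exact_mod_cast le_refl _)
  exact h.clm_apply contDiffOn_const

theorem chain_curve {V : Set (ℝ × ℝ)} (hV : IsOpen V) {G : ℝ × ℝ → ℝ}
    (hG : ContDiffOn ℝ ∞ G V) {u : ℝ → ℝ} {t p : ℝ}
    (hu : HasDerivAt u p t) (ht : (t, u t) ∈ V) :
    HasDerivAt (fun s => G (s, u s)) (pd1 G (t, u t) + p * pd2 G (t, u t)) t := by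
  have hGd : DifferentiableAt ℝ G (t, u t) :=
    (hG.contDiffAt (hV.mem_nhds ht)).differentiableAt (by simp)
  have hc : HasDerivAt (fun s => (s, u s)) ((1 : ℝ), p) t := (hasDerivAt_id t).prodMk hu
  have := hGd.hasFDerivAt.comp_hasDerivAt t hc
  refine this.congr_deriv ?_
  have : ((1:ℝ), p) = (1, 0) + p • ((0:ℝ), (1:ℝ)) := by simp
  rw [this, map_add, map_smul]
  simp [pd1, pd2, smul_eq_mul, mul_comm]

/-- the autonomous vector field for the ODE -/
def Wf : ℝ × ℝ × ℝ × ℝ → ℝ × ℝ × ℝ × ℝ := fun y =>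
  (1, y.2.2.1, y.2.2.2, -y.1 * y.2.2.1^4 * y.2.2.2^3 + y.2.1 * y.2.2.1^3 * y.2.2.2^3)

theorem Wf_contDiff : ContDiff ℝ ∞ Wf := by
  unfold Wf; fun_prop

theorem flow_exists (x₀ u₀ p₀ q₀ : ℝ) :
    ∃ (ε : ℝ) (Y : ℝ → ℝ × ℝ × ℝ × ℝ), 0 < ε ∧ Y x₀ = (x₀, u₀, p₀, q₀) ∧
      (∀ t ∈ Ioo (x₀ - ε) (x₀ + ε), HasDerivAt Y (Wf (Y t)) t) ∧
      ContDiffOn ℝ ∞ Y (Ioo (x₀ - ε) (x₀ + ε)) ∧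
      (∀ t ∈ Ioo (x₀ - ε) (x₀ + ε), (Y t).1 = t) := by
  obtain ⟨Y, hY0, ε, hε, hY⟩ :=
    ContDiffAt.exists_forall_mem_closedBall_exists_eq_forall_mem_Ioo_hasDerivAt₀ (f := Wf)
      (Wf_contDiff.of_le (by exact_mod_cast le_top)).contDiffAt (x₀ := (x₀, u₀, p₀, q₀)) x₀
  set J := Ioo (x₀ - ε) (x₀ + ε) with hJ
  have hJo : IsOpen J := isOpen_Ioo
  have hJc : Convex ℝ J := convex_Ioo _ _
  have hx₀J : x₀ ∈ J := by constructor <;> simp [hJ] <;> linarith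
  have hsm : ∀ n : ℕ, ContDiffOn ℝ n Y J := by
    intro n
    induction n with
    | zero =>
      simp only [CharP.cast_eq_zero]
      rw [contDiffOn_zero]
      exact fun t ht => (hY t ht).differentiableAt.continuousAt.continuousWithinAt
    | succ n ih =>
      have : ((n : WithTop ℕ∞) + 1) = ((n+1 : ℕ) : WithTop ℕ∞) := by push_cast; ring
      rw [← this, contDiffOn_succ_iff_derivWithin hJo.uniqueDiffOn]
      refine ⟨fun t ht => (hY t ht).differentiableAt.differentiableWithinAt, by simp, ?_⟩
      have heq : ∀ t ∈ J, derivWithin Y J t = Wf (Y t) := fun t ht =>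
        (hY t ht).hasDerivWithinAt.derivWithin (hJo.uniqueDiffOn t ht)
      exact ((Wf_contDiff.of_le (by exact_mod_cast le_top)).comp_contDiffOn ih).congr heq
  refine ⟨ε, Y, hε, hY0, hY, ?_, ?_⟩
  · rw [contDiffOn_infty]; exact hsm
  · -- first component is t
    intro t ht
    have hg : ∀ s ∈ J, HasDerivAt (fun r => (Y r).1 - r) 0 s := by
      intro s hs
      have h1 : HasDerivAt (fun r => (Y r).1) 1 s := by
        have := (ContinuousLinearMap.fst ℝ ℝ (ℝ × ℝ × ℝ)).hasFDerivAt.comp_hasDerivAt s (hY s hs)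
        simpa [Function.comp, Function.comp_def, Wf] using this
      simpa [Pi.sub_def] using h1.sub (hasDerivAt_id s)
    have hconst : (fun r => (Y r).1 - r) t = (fun r => (Y r).1 - r) x₀ := by
      apply hJc.is_const_of_fderivWithin_eq_zero
        (fun s hs => (hg s hs).differentiableAt.differentiableWithinAt) ?_ ht hx₀J
      intro s hs
      have := ((hg s hs).hasDerivWithinAt.hasFDerivWithinAt).fderivWithin (hJo.uniqueDiffOn s hs)
      rw [this]; ext w; simp
    have : (Y x₀).1 = x₀ := by rw [hY0]
    have h2 := hconst
    simp only [this] at h2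
    linarith [h2]

theorem image_open_of_deriv_sign {a b : ℝ} {X d : ℝ → ℝ}
    (hX : ∀ t ∈ Ioo a b, HasDerivAt X (d t) t)
    (hsgn : (∀ t ∈ Ioo a b, 0 < d t) ∨ (∀ t ∈ Ioo a b, d t < 0)) :
    IsOpen (X '' Ioo a b) := by
  have hcont : ContinuousOn X (Ioo a b) :=
    fun t ht => (hX t ht).continuousAt.continuousWithinAt
  have hderiv : ∀ t ∈ Ioo a b, deriv X t = d t := fun t ht => (hX t ht).deriv
  rw [isOpen_iff_forall_mem_open]
  rintro y ⟨c, hc, rfl⟩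
  have hac := hc.1
  have hcb := hc.2
  set a' := (a + c) / 2
  set b' := (c + b) / 2
  have ha' : a < a' ∧ a' < c := by constructor <;> simp [a'] <;> linarith
  have hb' : c < b' ∧ b' < b := by constructor <;> simp [b'] <;> linarith
  have hsub : Icc a' b' ⊆ Ioo a b := fun t ⟨h1, h2⟩ => ⟨lt_of_lt_of_le ha'.1 h1,
    lt_of_le_of_lt h2 hb'.2⟩
  have hsub2 : Ioo a' b' ⊆ Ioo a b := fun t ht => hsub (Ioo_subset_Icc_self ht)
  have hcont' : ContinuousOn X (Icc a' b') := hcont.mono hsub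
  have hmemIoo : a' ∈ Ioo a b := hsub ⟨le_refl _, le_of_lt (ha'.2.trans hb'.1)⟩
  have hmemIoo' : b' ∈ Ioo a b := hsub ⟨le_of_lt (ha'.2.trans hb'.1), le_refl _⟩
  rcases hsgn with hpos | hneg
  · have hmono : StrictMonoOn X (Ioo a b) := by
      apply strictMonoOn_of_deriv_pos (convex_Ioo a b) hcont
      intro t ht
      rw [interior_Ioo] at ht
      rw [hderiv t ht]; exact hpos t ht
    refine ⟨Ioo (X a') (X b'), ?_, isOpen_Ioo,
      ⟨hmono hmemIoo hc ha'.2, hmono hc hmemIoo' hb'.1⟩⟩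
    intro y hy
    obtain ⟨t, ht, rfl⟩ := intermediate_value_Ioo (le_of_lt (ha'.2.trans hb'.1)) hcont' hy
    exact ⟨t, hsub2 ht, rfl⟩
  · have hmono : StrictAntiOn X (Ioo a b) := by
      apply strictAntiOn_of_deriv_neg (convex_Ioo a b) hcont
      intro t ht
      rw [interior_Ioo] at ht
      rw [hderiv t ht]; exact hneg t ht
    refine ⟨Ioo (X b') (X a'), ?_, isOpen_Ioo,
      ⟨hmono hc hmemIoo' hb'.1, hmono hmemIoo hc ha'.2⟩⟩
    intro y hy
    obtain ⟨t, ht, rfl⟩ := intermediate_value_Ioo' (le_of_lt (ha'.2.trans hb'.1)) hcont' hy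
    exact ⟨t, hsub2 ht, rfl⟩

theorem pd2_contDiffOn {V : Set (ℝ × ℝ)} (hV : IsOpen V) {G : ℝ × ℝ → ℝ}
    (hG : ContDiffOn ℝ ∞ G V) : ContDiffOn ℝ ∞ (pd2 G) V := by
  have h : ContDiffOn ℝ ∞ (fderiv ℝ G) V :=
    hG.fderiv_of_isOpen (m := ∞) hV (by exact_mod_cast le_refl _)
  exact h.clm_apply contDiffOn_const

/-- first derivative of `G` along the curve `t ↦ (t, u t)` -/
def crv1 (G : ℝ × ℝ → ℝ) (u px : ℝ → ℝ) : ℝ → ℝ :=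
  fun t => pd1 G (t, u t) + px t * pd2 G (t, u t)

/-- second derivative of `G` along the curve -/
def crv2 (G : ℝ × ℝ → ℝ) (u px qx : ℝ → ℝ) : ℝ → ℝ :=
  fun t => crv1 (pd1 G) u px t + (qx t * pd2 G (t, u t) + px t * crv1 (pd2 G) u px t)

theorem crv1_hasDerivAt {V : Set (ℝ × ℝ)} (hV : IsOpen V) {G : ℝ × ℝ → ℝ}
    (hG : ContDiffOn ℝ ∞ G V) {u px : ℝ → ℝ} {t : ℝ}
    (hu : HasDerivAt u (px t) t) (ht : (t, u t) ∈ V) :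
    HasDerivAt (fun s => G (s, u s)) (crv1 G u px t) t :=
  chain_curve hV hG hu ht

theorem crv2_hasDerivAt {V : Set (ℝ × ℝ)} (hV : IsOpen V) {G : ℝ × ℝ → ℝ}
    (hG : ContDiffOn ℝ ∞ G V) {u px qx : ℝ → ℝ} {t : ℝ}
    (hu : HasDerivAt u (px t) t) (hp : HasDerivAt px (qx t) t) (ht : (t, u t) ∈ V) :
    HasDerivAt (crv1 G u px) (crv2 G u px qx t) t := by
  have h1 := crv1_hasDerivAt hV (pd1_contDiffOn hV hG) hu ht
  have h2 := crv1_hasDerivAt hV (pd2_contDiffOn hV hG) hu ht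
  have h3 := hp.mul (chain_curve hV (pd2_contDiffOn hV hG) hu ht)
  exact h1.add h3

theorem crv3_hasDerivAt {V : Set (ℝ × ℝ)} (hV : IsOpen V) {G : ℝ × ℝ → ℝ}
    (hG : ContDiffOn ℝ ∞ G V) {u px qx : ℝ → ℝ} {t r : ℝ}
    (hu : HasDerivAt u (px t) t) (hp : HasDerivAt px (qx t) t)
    (hq : HasDerivAt qx r t) (ht : (t, u t) ∈ V) :
    HasDerivAt (crv2 G u px qx)
      (crv2 (pd1 G) u px qx t +
        ((r * pd2 G (t, u t) + qx t * crv1 (pd2 G) u px t) +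
          (qx t * crv1 (pd2 G) u px t + px t * crv2 (pd2 G) u px qx t))) t := by
  have h1 := crv2_hasDerivAt hV (pd1_contDiffOn hV hG) hu hp ht
  have h2 := hq.mul (chain_curve hV (pd2_contDiffOn hV hG) hu ht)
  have h3 := hp.mul (crv1_hasDerivAt hV (pd2_contDiffOn hV hG) hu ht)
  have h4 := crv2_hasDerivAt hV (pd2_contDiffOn hV hG) hu hp ht
  have h4 := crv2_hasDerivAt hV (pd2_contDiffOn hV hG) hu hp ht
  exact h1.add (h2.add (hp.mul h4))

abbrev unc (φ : ℝ → ℝ → ℝ) : ℝ × ℝ → ℝ := fun z => φ z.1 z.2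

def c1co (G : ℝ × ℝ → ℝ) (z : ℝ × ℝ) (p : ℝ) : ℝ := pd1 G z + p * pd2 G z
def gco (G : ℝ × ℝ → ℝ) (z : ℝ × ℝ) (p : ℝ) : ℝ :=
  pd1 (pd1 G) z + p * pd2 (pd1 G) z + p * (pd1 (pd2 G) z + p * pd2 (pd2 G) z)
def t1co (G : ℝ × ℝ → ℝ) (z : ℝ × ℝ) (p : ℝ) : ℝ :=
  pd2 (pd1 G) z + 2 * pd1 (pd2 G) z + 3 * p * pd2 (pd2 G) z
def t0co (G : ℝ × ℝ → ℝ) (z : ℝ × ℝ) (p : ℝ) : ℝ :=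
  gco (pd1 G) z p + p * gco (pd2 G) z p

theorem crv1_val (G : ℝ × ℝ → ℝ) (u px : ℝ → ℝ) (t : ℝ) :
    crv1 G u px t = c1co G (t, u t) (px t) := rfl

theorem crv2_val (G : ℝ × ℝ → ℝ) (u px qx : ℝ → ℝ) (t : ℝ) :
    crv2 G u px qx t = gco G (t, u t) (px t) + qx t * pd2 G (t, u t) := by
  unfold crv2 crv1 gco; ring

theorem crv3_val (G : ℝ × ℝ → ℝ) (u px qx : ℝ → ℝ) (t r : ℝ) :
    crv2 (pd1 G) u px qx t +
        ((r * pd2 G (t, u t) + qx t * crv1 (pd2 G) u px t) +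
          (qx t * crv1 (pd2 G) u px t + px t * crv2 (pd2 G) u px qx t))
      = t0co G (t, u t) (px t) + qx t * t1co G (t, u t) (px t) + r * pd2 G (t, u t) := by
  simp only [crv2, crv1, gco, t0co, t1co]; ring


/-- (Remark 4.2.)  There is no point transformation on any nonempty
open set `V ⊆ ℝ²` and no smooth nowhere-vanishing `ā` with `((2ā·ā'' − 3(ā')²)/ā⁴)' ≠ 0`
under which `u''' = −x·(u')⁴(u'')³ + u·(u')³(u'')³` is equivalent to `ū''' = ā(x̄)³·ū`:
for every such `V`, point transformation and `ā` there is a smooth solution `u` of the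
nonlinear equation with `u' ≠ 0`, `u'' ≠ 0`, graph in `V`, and `(φ(x,u(x)))' ≠ 0`, whose
transform fails to solve `ū''' = ā(x̄)³·ū`. -/
theorem example2_not_point_linearizable :
    ∀ (V : Set (ℝ × ℝ)), V.Nonempty →
      ∀ φ ψ : ℝ → ℝ → ℝ, IsPointTransformOn V φ ψ →
        ∀ abar : ℝ → ℝ,
          ContDiff ℝ (⊤ : ℕ∞) abar → (∀ t, abar t ≠ 0) →
          (∀ t, deriv (fun r =>
            (2 * abar r * deriv (deriv abar) r - 3 * (deriv abar r)^2) / (abar r)^4) t ≠ 0) →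
          ∃ (I : Set ℝ) (u : ℝ → ℝ),
            IsOpen I ∧ I.OrdConnected ∧ I.Nonempty ∧
            SolvesODE3 (fun x' u' p' q' => -x' * p'^4 * q'^3 + u' * p'^3 * q'^3) I u ∧
            (∀ x ∈ I, deriv u x ≠ 0) ∧
            (∀ x ∈ I, deriv (deriv u) x ≠ 0) ∧
            (∀ x ∈ I, (x, u x) ∈ V) ∧
            (∀ x ∈ I, deriv (fun t => φ t (u t)) x ≠ 0) ∧
            ¬∃ v : ℝ → ℝ,
                ContDiffOn ℝ (⊤ : ℕ∞) v ((fun t => φ t (u t)) '' I) ∧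
                (∀ x ∈ I, v (φ x (u x)) = ψ x (u x)) ∧
                (∀ y ∈ (fun t => φ t (u t)) '' I,
                  deriv (deriv (deriv v)) y = (abar y)^3 * v y) := by
  intro V hVne φ ψ hpt abar habar hane hinv
  by_contra hcon
  have hVo : IsOpen V := hpt.isOpen
  have hΦ : ContDiffOn ℝ ∞ (unc φ) V := contDiff_fst.comp_contDiffOn hpt.smooth
  have hΨ : ContDiffOn ℝ ∞ (unc ψ) V := contDiff_snd.comp_contDiffOn hpt.smooth
  -- choose a base point with nonzero x-coordinate
  obtain ⟨z₁, hz₁⟩ := hVne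
  obtain ⟨ε₁, hε₁, hball₁⟩ := Metric.isOpen_iff.mp hVo z₁ hz₁
  obtain ⟨x₀, u₀, hz₀V, hx₀⟩ : ∃ x₀ u₀ : ℝ, (x₀, u₀) ∈ V ∧ x₀ ≠ 0 := by
    rcases eq_or_ne z₁.1 0 with h0 | h0
    · refine ⟨z₁.1 + ε₁ / 2, z₁.2, hball₁ ?_, by rw [h0, zero_add]; positivity⟩
      have hd : dist ((z₁.1 + ε₁ / 2, z₁.2) : ℝ × ℝ) z₁ = ε₁ / 2 := by
        rw [Prod.dist_eq]
        simp only [Real.dist_eq, dist_self]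
        rw [show z₁.1 + ε₁ / 2 - z₁.1 = ε₁ / 2 by ring, abs_of_pos (by positivity)]
        exact max_eq_left (by positivity)
      rw [Metric.mem_ball, hd]; linarith
    · exact ⟨z₁.1, z₁.2, by simpa using hz₁, h0⟩
  -- identify the slice derivatives with `pd1`/`pd2`
  have hslice1 : ∀ G : ℝ × ℝ → ℝ, ContDiffOn ℝ ∞ G V →
      deriv (fun t => G (t, u₀)) x₀ = pd1 G (x₀, u₀) := by
    intro G hG
    have h := chain_curve hVo hG (u := fun _ => u₀) (hasDerivAt_const x₀ u₀) hz₀V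
    simpa using h.deriv
  have hslice2 : ∀ G : ℝ × ℝ → ℝ, ContDiffOn ℝ ∞ G V →
      deriv (fun s => G (x₀, s)) u₀ = pd2 G (x₀, u₀) := by
    intro G hG
    have hGd : DifferentiableAt ℝ G (x₀, u₀) :=
      (hG.contDiffAt (hVo.mem_nhds hz₀V)).differentiableAt (by simp)
    have h := hGd.hasFDerivAt.comp_hasDerivAt u₀
      ((hasDerivAt_const u₀ x₀).prodMk (hasDerivAt_id u₀))
    simpa [pd2, Function.comp_def] using h.deriv
  have hJac : pd1 (unc φ) (x₀, u₀) * pd2 (unc ψ) (x₀, u₀)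
      - pd2 (unc φ) (x₀, u₀) * pd1 (unc ψ) (x₀, u₀) ≠ 0 := by
    have h := hpt.jac_ne x₀ u₀ hz₀V
    rwa [show (fun t => φ t u₀) = (fun t => unc φ (t, u₀)) from rfl,
      show (fun t => ψ x₀ t) = (fun s => unc ψ (x₀, s)) from rfl,
      show (fun t => φ x₀ t) = (fun s => unc φ (x₀, s)) from rfl,
      show (fun t => ψ t u₀) = (fun t => unc ψ (t, u₀)) from rfl,
      hslice1 _ hΦ, hslice1 _ hΨ, hslice2 _ hΦ, hslice2 _ hΨ] at h
  -- choose the slope p₀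
  set p₀ : ℝ := |u₀ / x₀| + |pd1 (unc φ) (x₀, u₀) / pd2 (unc φ) (x₀, u₀)| + 1 with hp₀def
  have hp₀pos : 0 < p₀ := by positivity
  have hCne : u₀ - x₀ * p₀ ≠ 0 := by
    intro h
    have h1 : |u₀ / x₀| = p₀ := by
      rw [show u₀ / x₀ = p₀ from by field_simp; linarith, abs_of_pos hp₀pos]
    have h2 := hp₀def
    rw [h1] at h2
    nlinarith [abs_nonneg (pd1 (unc φ) (x₀, u₀) / pd2 (unc φ) (x₀, u₀))]
  have hDne : c1co (unc φ) (x₀, u₀) p₀ ≠ 0 := by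
    unfold c1co
    rcases eq_or_ne (pd2 (unc φ) (x₀, u₀)) 0 with h2 | h2
    · rw [h2]; simp only [mul_zero, add_zero]
      intro h1; apply hJac; rw [h1, h2]; ring
    · intro h
      have h1 : pd1 (unc φ) (x₀, u₀) / pd2 (unc φ) (x₀, u₀) = -p₀ := by
        field_simp; linear_combination h
      have h3 : |pd1 (unc φ) (x₀, u₀) / pd2 (unc φ) (x₀, u₀)| = p₀ := by
        rw [h1, abs_neg, abs_of_pos hp₀pos]
      have h4 := hp₀def
      rw [h3] at h4
      nlinarith [abs_nonneg (u₀ / x₀)]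
  -- the key polynomial identity, for every nonzero q
  have key : ∀ q : ℝ, q ≠ 0 →
      (t0co (unc ψ) (x₀, u₀) p₀ + q * t1co (unc ψ) (x₀, u₀) p₀
          + (-x₀ * p₀^4 * q^3 + u₀ * p₀^3 * q^3) * pd2 (unc ψ) (x₀, u₀))
            * (c1co (unc φ) (x₀, u₀) p₀)^3
        = ((abar (φ x₀ u₀))^3 * ψ x₀ u₀) * (c1co (unc φ) (x₀, u₀) p₀)^6
          + 3 * (c1co (unc φ) (x₀, u₀) p₀)
              * (gco (unc φ) (x₀, u₀) p₀ + q * pd2 (unc φ) (x₀, u₀))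
              * ((c1co (unc φ) (x₀, u₀) p₀)
                    * (gco (unc ψ) (x₀, u₀) p₀ + q * pd2 (unc ψ) (x₀, u₀))
                  - (c1co (unc ψ) (x₀, u₀) p₀)
                    * (gco (unc φ) (x₀, u₀) p₀ + q * pd2 (unc φ) (x₀, u₀)))
          + (c1co (unc ψ) (x₀, u₀) p₀)
              * (t0co (unc φ) (x₀, u₀) p₀ + q * t1co (unc φ) (x₀, u₀) p₀
                  + (-x₀ * p₀^4 * q^3 + u₀ * p₀^3 * q^3) * pd2 (unc φ) (x₀, u₀))
              * (c1co (unc φ) (x₀, u₀) p₀)^2 := by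
    intro q hq
    obtain ⟨ε, Y, hε, hY0, hYd, hYsm, hY1⟩ := flow_exists x₀ u₀ p₀ q
    set u : ℝ → ℝ := fun t => (Y t).2.1 with hudef
    set px : ℝ → ℝ := fun t => (Y t).2.2.1 with hpxdef
    set qx : ℝ → ℝ := fun t => (Y t).2.2.2 with hqxdef
    have hu0 : u x₀ = u₀ := by simp only [hudef, hY0]
    have hp0 : px x₀ = p₀ := by simp only [hpxdef, hY0]
    have hq0 : qx x₀ = q := by simp only [hqxdef, hY0]
    have hJo : IsOpen (Ioo (x₀ - ε) (x₀ + ε)) := isOpen_Ioo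
    have hx₀J : x₀ ∈ Ioo (x₀ - ε) (x₀ + ε) := by constructor <;> linarith
    have hu' : ∀ t ∈ Ioo (x₀ - ε) (x₀ + ε), HasDerivAt u (px t) t := by
      intro t ht
      have h := ((ContinuousLinearMap.fst ℝ ℝ (ℝ × ℝ)).comp
        (ContinuousLinearMap.snd ℝ ℝ (ℝ × ℝ × ℝ))).hasFDerivAt.comp_hasDerivAt t (hYd t ht)
      exact h
    have hp' : ∀ t ∈ Ioo (x₀ - ε) (x₀ + ε), HasDerivAt px (qx t) t := by
      intro t ht
      have h := ((ContinuousLinearMap.fst ℝ ℝ ℝ).comp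
        ((ContinuousLinearMap.snd ℝ ℝ (ℝ × ℝ)).comp
          (ContinuousLinearMap.snd ℝ ℝ (ℝ × ℝ × ℝ)))).hasFDerivAt.comp_hasDerivAt t (hYd t ht)
      exact h
    have hq'' : ∀ t ∈ Ioo (x₀ - ε) (x₀ + ε), HasDerivAt qx
        (-t * px t^4 * qx t^3 + u t * px t^3 * qx t^3) t := by
      intro t ht
      have h := ((ContinuousLinearMap.snd ℝ ℝ ℝ).comp
        ((ContinuousLinearMap.snd ℝ ℝ (ℝ × ℝ)).comp
          (ContinuousLinearMap.snd ℝ ℝ (ℝ × ℝ × ℝ)))).hasFDerivAt.comp_hasDerivAt t (hYd t ht)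
      have h2 : ((ContinuousLinearMap.snd ℝ ℝ ℝ).comp
        ((ContinuousLinearMap.snd ℝ ℝ (ℝ × ℝ)).comp
          (ContinuousLinearMap.snd ℝ ℝ (ℝ × ℝ × ℝ)))) (Wf (Y t))
          = -t * px t^4 * qx t^3 + u t * px t^3 * qx t^3 := by
        simp only [ContinuousLinearMap.coe_comp', Function.comp_apply,
          ContinuousLinearMap.coe_snd', Wf]
        rw [hY1 t ht]
      rw [h2] at h
      exact h
    have husm : ContDiffOn ℝ ∞ u (Ioo (x₀ - ε) (x₀ + ε)) := by
      have := (((ContinuousLinearMap.fst ℝ ℝ (ℝ × ℝ)).comp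
        (ContinuousLinearMap.snd ℝ ℝ (ℝ × ℝ × ℝ))).contDiff).comp_contDiffOn hYsm
      exact this
    have hpxc : ContinuousOn px (Ioo (x₀ - ε) (x₀ + ε)) := by
      have := (((ContinuousLinearMap.fst ℝ ℝ ℝ).comp
        ((ContinuousLinearMap.snd ℝ ℝ (ℝ × ℝ)).comp
          (ContinuousLinearMap.snd ℝ ℝ (ℝ × ℝ × ℝ)))).continuous).comp_continuousOn
        hYsm.continuousOn
      exact this
    have hqxc : ContinuousOn qx (Ioo (x₀ - ε) (x₀ + ε)) := by
      have := (((ContinuousLinearMap.snd ℝ ℝ ℝ).comp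
        ((ContinuousLinearMap.snd ℝ ℝ (ℝ × ℝ)).comp
          (ContinuousLinearMap.snd ℝ ℝ (ℝ × ℝ × ℝ)))).continuous).comp_continuousOn
        hYsm.continuousOn
      exact this
    have hd1 : ∀ t ∈ Ioo (x₀ - ε) (x₀ + ε), deriv u t = px t := fun t ht => (hu' t ht).deriv
    have hd2 : ∀ t ∈ Ioo (x₀ - ε) (x₀ + ε), deriv (deriv u) t = qx t := by
      intro t ht
      have hev : deriv u =ᶠ[nhds t] px :=
        Filter.eventuallyEq_of_mem (hJo.mem_nhds ht) (fun s hs => hd1 s hs)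
      rw [hev.deriv_eq]; exact (hp' t ht).deriv
    have hd3 : ∀ t ∈ Ioo (x₀ - ε) (x₀ + ε),
        deriv (deriv (deriv u)) t = -t * px t^4 * qx t^3 + u t * px t^3 * qx t^3 := by
      intro t ht
      have hev : deriv (deriv u) =ᶠ[nhds t] qx :=
        Filter.eventuallyEq_of_mem (hJo.mem_nhds ht) (fun s hs => hd2 s hs)
      rw [hev.deriv_eq]; exact (hq'' t ht).deriv
    -- carve out the good subinterval
    have hγc : ContinuousOn (fun t => (t, u t)) (Ioo (x₀ - ε) (x₀ + ε)) :=
      continuousOn_id.prodMk husm.continuousOn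
    have hA1o : IsOpen (Ioo (x₀ - ε) (x₀ + ε) ∩ (fun t => (t, u t)) ⁻¹' V) :=
      hγc.isOpen_inter_preimage hJo hVo
    have hdXc : ContinuousOn (crv1 (unc φ) u px)
        (Ioo (x₀ - ε) (x₀ + ε) ∩ (fun t => (t, u t)) ⁻¹' V) := by
      apply ContinuousOn.add
      · exact (pd1_contDiffOn hVo hΦ).continuousOn.comp (hγc.mono inter_subset_left)
          (fun t ht => ht.2)
      · exact (hpxc.mono inter_subset_left).mul
          ((pd2_contDiffOn hVo hΦ).continuousOn.comp (hγc.mono inter_subset_left)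
            (fun t ht => ht.2))
    have hA2o : IsOpen ((Ioo (x₀ - ε) (x₀ + ε) ∩ (fun t => (t, u t)) ⁻¹' V)
        ∩ px ⁻¹' ({0}ᶜ)) :=
      (hpxc.mono inter_subset_left).isOpen_inter_preimage hA1o isOpen_compl_singleton
    have hA3o : IsOpen (((Ioo (x₀ - ε) (x₀ + ε) ∩ (fun t => (t, u t)) ⁻¹' V)
        ∩ px ⁻¹' ({0}ᶜ)) ∩ qx ⁻¹' ({0}ᶜ)) :=
      (hqxc.mono (inter_subset_left.trans inter_subset_left)).isOpen_inter_preimage hA2o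
        isOpen_compl_singleton
    have hA4o : IsOpen ((((Ioo (x₀ - ε) (x₀ + ε) ∩ (fun t => (t, u t)) ⁻¹' V)
        ∩ px ⁻¹' ({0}ᶜ)) ∩ qx ⁻¹' ({0}ᶜ))
        ∩ (crv1 (unc φ) u px) ⁻¹'
            (Metric.ball (c1co (unc φ) (x₀, u₀) p₀) |c1co (unc φ) (x₀, u₀) p₀|)) :=
      (hdXc.mono (inter_subset_left.trans inter_subset_left)).isOpen_inter_preimage hA3o
        Metric.isOpen_ball
    have hdX0 : crv1 (unc φ) u px x₀ = c1co (unc φ) (x₀, u₀) p₀ := by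
      rw [crv1_val, hu0, hp0]
    have hx₀A4 : x₀ ∈ ((((Ioo (x₀ - ε) (x₀ + ε) ∩ (fun t => (t, u t)) ⁻¹' V)
        ∩ px ⁻¹' ({0}ᶜ)) ∩ qx ⁻¹' ({0}ᶜ))
        ∩ (crv1 (unc φ) u px) ⁻¹'
            (Metric.ball (c1co (unc φ) (x₀, u₀) p₀) |c1co (unc φ) (x₀, u₀) p₀|)) := by
      refine ⟨⟨⟨⟨hx₀J, ?_⟩, ?_⟩, ?_⟩, ?_⟩
      · show (x₀, u x₀) ∈ V
        rw [hu0]; exact hz₀V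
      · show px x₀ ∈ ({0}ᶜ : Set ℝ)
        rw [hp0]; simpa using ne_of_gt hp₀pos
      · show qx x₀ ∈ ({0}ᶜ : Set ℝ)
        rw [hq0]; simpa using hq
      · show crv1 (unc φ) u px x₀ ∈ Metric.ball _ _
        rw [hdX0]; exact Metric.mem_ball_self (abs_pos.mpr hDne)
    obtain ⟨δ, hδ, hballS⟩ := Metric.isOpen_iff.mp hA4o x₀ hx₀A4
    have hIsub : Ioo (x₀ - δ) (x₀ + δ) ⊆ ((((Ioo (x₀ - ε) (x₀ + ε)
        ∩ (fun t => (t, u t)) ⁻¹' V) ∩ px ⁻¹' ({0}ᶜ)) ∩ qx ⁻¹' ({0}ᶜ))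
        ∩ (crv1 (unc φ) u px) ⁻¹'
            (Metric.ball (c1co (unc φ) (x₀, u₀) p₀) |c1co (unc φ) (x₀, u₀) p₀|)) := by
      rw [← Real.ball_eq_Ioo]; exact hballS
    have hx₀I : x₀ ∈ Ioo (x₀ - δ) (x₀ + δ) := by constructor <;> linarith
    have hIJ : ∀ t ∈ Ioo (x₀ - δ) (x₀ + δ), t ∈ Ioo (x₀ - ε) (x₀ + ε) :=
      fun t ht => (hIsub ht).1.1.1.1
    have hIV : ∀ t ∈ Ioo (x₀ - δ) (x₀ + δ), (t, u t) ∈ V := fun t ht => (hIsub ht).1.1.1.2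
    have hIpx : ∀ t ∈ Ioo (x₀ - δ) (x₀ + δ), px t ≠ 0 := fun t ht => by
      have := (hIsub ht).1.1.2; simpa using this
    have hIqx : ∀ t ∈ Ioo (x₀ - δ) (x₀ + δ), qx t ≠ 0 := fun t ht => by
      have := (hIsub ht).1.2; simpa using this
    have hIdX : ∀ t ∈ Ioo (x₀ - δ) (x₀ + δ),
        |crv1 (unc φ) u px t - c1co (unc φ) (x₀, u₀) p₀| < |c1co (unc φ) (x₀, u₀) p₀| :=
      fun t ht => by
        have := (hIsub ht).2
        rwa [Set.mem_preimage, Metric.mem_ball, Real.dist_eq] at this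
    have hdXne : ∀ t ∈ Ioo (x₀ - δ) (x₀ + δ), crv1 (unc φ) u px t ≠ 0 := by
      intro t ht h0
      have := hIdX t ht
      rw [h0, zero_sub, abs_neg] at this
      exact lt_irrefl _ this
    have hXd : ∀ t ∈ Ioo (x₀ - δ) (x₀ + δ),
        HasDerivAt (fun s => φ s (u s)) (crv1 (unc φ) u px t) t := fun t ht =>
      crv1_hasDerivAt hVo hΦ (hu' t (hIJ t ht)) (hIV t ht)
    have hsolves : SolvesODE3 (fun x' u' p' q' => -x' * p'^4 * q'^3 + u' * p'^3 * q'^3)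
        (Ioo (x₀ - δ) (x₀ + δ)) u := by
      constructor
      · exact husm.mono (fun t ht => hIJ t ht)
      · intro x hx
        rw [hd3 x (hIJ x hx), hd1 x (hIJ x hx), hd2 x (hIJ x hx)]
    have hIne : (Ioo (x₀ - δ) (x₀ + δ)).Nonempty := ⟨x₀, hx₀I⟩
    have hder_ne : ∀ x ∈ Ioo (x₀ - δ) (x₀ + δ), deriv (fun t => φ t (u t)) x ≠ 0 :=
      fun x hx => by rw [(hXd x hx).deriv]; exact hdXne x hx
    have hex : ∃ v : ℝ → ℝ,
        ContDiffOn ℝ (⊤ : ℕ∞) v ((fun t => φ t (u t)) '' Ioo (x₀ - δ) (x₀ + δ)) ∧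
        (∀ x ∈ Ioo (x₀ - δ) (x₀ + δ), v (φ x (u x)) = ψ x (u x)) ∧
        (∀ y ∈ (fun t => φ t (u t)) '' Ioo (x₀ - δ) (x₀ + δ),
          deriv (deriv (deriv v)) y = (abar y)^3 * v y) := by
      by_contra hnv
      exact hcon ⟨Ioo (x₀ - δ) (x₀ + δ), u, isOpen_Ioo, ordConnected_Ioo, hIne, hsolves,
        (fun x hx => by rw [hd1 x (hIJ x hx)]; exact hIpx x hx),
        (fun x hx => by rw [hd2 x (hIJ x hx)]; exact hIqx x hx),
        hIV, hder_ne, hnv⟩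
    obtain ⟨v, hv_sm, hvψ, hvode⟩ := hex
    have hsgn : (∀ t ∈ Ioo (x₀ - δ) (x₀ + δ), 0 < crv1 (unc φ) u px t)
        ∨ (∀ t ∈ Ioo (x₀ - δ) (x₀ + δ), crv1 (unc φ) u px t < 0) := by
      rcases lt_or_gt_of_ne hDne with hD | hD
      · right; intro t ht
        have h := abs_lt.mp (hIdX t ht)
        rw [abs_of_neg hD] at h
        linarith [h.2]
      · left; intro t ht
        have h := abs_lt.mp (hIdX t ht)
        rw [abs_of_pos hD] at h
        linarith [h.1]
    have himg : IsOpen ((fun t => φ t (u t)) '' Ioo (x₀ - δ) (x₀ + δ)) :=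
      image_open_of_deriv_sign hXd hsgn
    have hvsm : ContDiffOn ℝ ∞ v ((fun t => φ t (u t)) '' Ioo (x₀ - δ) (x₀ + δ)) := hv_sm
    have hdv : ContDiffOn ℝ ∞ (deriv v)
        ((fun t => φ t (u t)) '' Ioo (x₀ - δ) (x₀ + δ)) :=
      hvsm.deriv_of_isOpen (m := ∞) himg (by exact_mod_cast le_refl _)
    have hd2v : ContDiffOn ℝ ∞ (deriv (deriv v))
        ((fun t => φ t (u t)) '' Ioo (x₀ - δ) (x₀ + δ)) :=
      hdv.deriv_of_isOpen (m := ∞) himg (by exact_mod_cast le_refl _)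
    have hmemI : ∀ t ∈ Ioo (x₀ - δ) (x₀ + δ),
        φ t (u t) ∈ (fun t => φ t (u t)) '' Ioo (x₀ - δ) (x₀ + δ) :=
      fun t ht => ⟨t, ht, rfl⟩
    have hvd : ∀ y ∈ (fun t => φ t (u t)) '' Ioo (x₀ - δ) (x₀ + δ),
        HasDerivAt v (deriv v y) y := fun y hy =>
      ((hvsm.contDiffAt (himg.mem_nhds hy)).differentiableAt
        (by simp)).hasDerivAt
    have hdvd : ∀ y ∈ (fun t => φ t (u t)) '' Ioo (x₀ - δ) (x₀ + δ),
        HasDerivAt (deriv v) (deriv (deriv v) y) y := fun y hy =>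
      ((hdv.contDiffAt (himg.mem_nhds hy)).differentiableAt
        (by simp)).hasDerivAt
    have hd2vd : ∀ y ∈ (fun t => φ t (u t)) '' Ioo (x₀ - δ) (x₀ + δ),
        HasDerivAt (deriv (deriv v)) (deriv (deriv (deriv v)) y) y := fun y hy =>
      ((hd2v.contDiffAt (himg.mem_nhds hy)).differentiableAt
        (by simp)).hasDerivAt
    -- first-order identity
    have hvX : ∀ t ∈ Ioo (x₀ - δ) (x₀ + δ), HasDerivAt (fun s => ψ s (u s))
        (deriv v (φ t (u t)) * crv1 (unc φ) u px t) t := by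
      intro t ht
      have h1 : HasDerivAt (v ∘ fun s => φ s (u s))
          (deriv v (φ t (u t)) * crv1 (unc φ) u px t) t :=
        (hvd _ (hmemI t ht)).comp t (hXd t ht)
      exact h1.congr_of_eventuallyEq
        (Filter.eventuallyEq_of_mem (isOpen_Ioo.mem_nhds ht) (fun s hs => (hvψ s hs).symm))
    have hΨd : ∀ t ∈ Ioo (x₀ - δ) (x₀ + δ),
        HasDerivAt (fun s => ψ s (u s)) (crv1 (unc ψ) u px t) t := fun t ht =>
      crv1_hasDerivAt hVo hΨ (hu' t (hIJ t ht)) (hIV t ht)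
    have eqd1 : ∀ t ∈ Ioo (x₀ - δ) (x₀ + δ),
        crv1 (unc ψ) u px t = deriv v (φ t (u t)) * crv1 (unc φ) u px t :=
      fun t ht => (hΨd t ht).unique (hvX t ht)
    -- second-order identity
    have hA2φ : ∀ t ∈ Ioo (x₀ - δ) (x₀ + δ),
        HasDerivAt (crv1 (unc φ) u px) (crv2 (unc φ) u px qx t) t := fun t ht =>
      crv2_hasDerivAt hVo hΦ (hu' t (hIJ t ht)) (hp' t (hIJ t ht)) (hIV t ht)
    have hA2ψ : ∀ t ∈ Ioo (x₀ - δ) (x₀ + δ),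
        HasDerivAt (crv1 (unc ψ) u px) (crv2 (unc ψ) u px qx t) t := fun t ht =>
      crv2_hasDerivAt hVo hΨ (hu' t (hIJ t ht)) (hp' t (hIJ t ht)) (hIV t ht)
    have hdvX : ∀ t ∈ Ioo (x₀ - δ) (x₀ + δ), HasDerivAt (fun s => deriv v (φ s (u s)))
        (deriv (deriv v) (φ t (u t)) * crv1 (unc φ) u px t) t := fun t ht =>
      ((hdvd _ (hmemI t ht)).comp t (hXd t ht) :)
    have hR2 : ∀ t ∈ Ioo (x₀ - δ) (x₀ + δ),
        HasDerivAt (fun s => deriv v (φ s (u s)) * crv1 (unc φ) u px s)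
          (deriv (deriv v) (φ t (u t)) * crv1 (unc φ) u px t * crv1 (unc φ) u px t
            + deriv v (φ t (u t)) * crv2 (unc φ) u px qx t) t := fun t ht =>
      (hdvX t ht).mul (hA2φ t ht)
    have eqd2 : ∀ t ∈ Ioo (x₀ - δ) (x₀ + δ), crv2 (unc ψ) u px qx t
        = deriv (deriv v) (φ t (u t)) * crv1 (unc φ) u px t * crv1 (unc φ) u px t
          + deriv v (φ t (u t)) * crv2 (unc φ) u px qx t := by
      intro t ht
      refine (hA2ψ t ht).unique ?_
      exact (hR2 t ht).congr_of_eventuallyEq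
        (Filter.eventuallyEq_of_mem (isOpen_Ioo.mem_nhds ht) (fun s hs => eqd1 s hs))
    -- third-order identity at x₀
    have hA3φ := crv3_hasDerivAt hVo hΦ (hu' x₀ (hIJ x₀ hx₀I)) (hp' x₀ (hIJ x₀ hx₀I))
      (hq'' x₀ (hIJ x₀ hx₀I)) (hIV x₀ hx₀I)
    have hA3ψ := crv3_hasDerivAt hVo hΨ (hu' x₀ (hIJ x₀ hx₀I)) (hp' x₀ (hIJ x₀ hx₀I))
      (hq'' x₀ (hIJ x₀ hx₀I)) (hIV x₀ hx₀I)
    have hd2vX : HasDerivAt (fun s => deriv (deriv v) (φ s (u s)))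
        (deriv (deriv (deriv v)) (φ x₀ (u x₀)) * crv1 (unc φ) u px x₀) x₀ :=
      ((hd2vd _ (hmemI x₀ hx₀I)).comp x₀ (hXd x₀ hx₀I) :)
    have hR3 := ((hd2vX.mul (hA2φ x₀ hx₀I)).mul (hA2φ x₀ hx₀I)).add
      ((hdvX x₀ hx₀I).mul hA3φ)
    have eqd3 := hA3ψ.unique (hR3.congr_of_eventuallyEq
      (Filter.eventuallyEq_of_mem (isOpen_Ioo.mem_nhds hx₀I) (fun s hs => eqd2 s hs)))
    -- the ODE satisfied by v at the image point
    have hODE : deriv (deriv (deriv v)) (φ x₀ u₀) = (abar (φ x₀ u₀))^3 * ψ x₀ u₀ := by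
      have hmem : φ x₀ u₀ ∈ (fun t => φ t (u t)) '' Ioo (x₀ - δ) (x₀ + δ) := by
        refine ⟨x₀, hx₀I, ?_⟩
        simp only
        rw [hu0]
      rw [hvode _ hmem]
      have hval := hvψ x₀ hx₀I
      rw [hu0] at hval
      rw [hval]
    -- canonical values
    have hc1ψ : crv1 (unc ψ) u px x₀ = c1co (unc ψ) (x₀, u₀) p₀ := by
      rw [crv1_val, hu0, hp0]
    have hc2φ : crv2 (unc φ) u px qx x₀
        = gco (unc φ) (x₀, u₀) p₀ + q * pd2 (unc φ) (x₀, u₀) := by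
      rw [crv2_val, hu0, hp0, hq0]
    have hc2ψ : crv2 (unc ψ) u px qx x₀
        = gco (unc ψ) (x₀, u₀) p₀ + q * pd2 (unc ψ) (x₀, u₀) := by
      rw [crv2_val, hu0, hp0, hq0]
    have hEq1 : c1co (unc ψ) (x₀, u₀) p₀
        = deriv v (φ x₀ u₀) * c1co (unc φ) (x₀, u₀) p₀ := by
      have h := eqd1 x₀ hx₀I
      rw [hc1ψ, hdX0, hu0] at h
      exact h
    have hEq2 : gco (unc ψ) (x₀, u₀) p₀ + q * pd2 (unc ψ) (x₀, u₀)
        = deriv (deriv v) (φ x₀ u₀) * c1co (unc φ) (x₀, u₀) p₀ * c1co (unc φ) (x₀, u₀) p₀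
          + deriv v (φ x₀ u₀) * (gco (unc φ) (x₀, u₀) p₀ + q * pd2 (unc φ) (x₀, u₀)) := by
      have h := eqd2 x₀ hx₀I
      rw [hc2ψ, hc2φ, hdX0, hu0] at h
      exact h
    -- massage the third-order identity
    simp only [Pi.mul_apply] at eqd3
    rw [crv3_val, crv3_val, hc2φ, hdX0, hu0, hp0, hq0, hODE] at eqd3
    linear_combination (c1co (unc φ) (x₀, u₀) p₀)^3 * eqd3
      + (-3 * (c1co (unc φ) (x₀, u₀) p₀)^2
          * (gco (unc φ) (x₀, u₀) p₀ + q * pd2 (unc φ) (x₀, u₀))) * hEq2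
      + (3 * (c1co (unc φ) (x₀, u₀) p₀)
            * (gco (unc φ) (x₀, u₀) p₀ + q * pd2 (unc φ) (x₀, u₀))^2
          - (t0co (unc φ) (x₀, u₀) p₀ + q * t1co (unc φ) (x₀, u₀) p₀
              + (-x₀ * p₀^4 * q^3 + u₀ * p₀^3 * q^3) * pd2 (unc φ) (x₀, u₀))
            * (c1co (unc φ) (x₀, u₀) p₀)^2) * hEq1
  -- conclude: the third finite difference of the cubic in q kills everything except
  -- the leading coefficient, which is nonzero
  have h1 := key 1 one_ne_zero
  have h2 := key 2 two_ne_zero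
  have h3 := key 3 three_ne_zero
  have h4 := key 4 four_ne_zero
  have hzero : (u₀ - x₀ * p₀) * p₀^3 * (c1co (unc φ) (x₀, u₀) p₀)^2
      * (c1co (unc φ) (x₀, u₀) p₀ * pd2 (unc ψ) (x₀, u₀)
          - c1co (unc ψ) (x₀, u₀) p₀ * pd2 (unc φ) (x₀, u₀)) * 6 = 0 := by
    linear_combination (-1 : ℝ) * h1 + 3 * h2 - 3 * h3 + h4
  have hJ2 : c1co (unc φ) (x₀, u₀) p₀ * pd2 (unc ψ) (x₀, u₀)
      - c1co (unc ψ) (x₀, u₀) p₀ * pd2 (unc φ) (x₀, u₀)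
      = pd1 (unc φ) (x₀, u₀) * pd2 (unc ψ) (x₀, u₀)
        - pd2 (unc φ) (x₀, u₀) * pd1 (unc ψ) (x₀, u₀) := by
    unfold c1co; ring
  rw [hJ2] at hzero
  exact (mul_ne_zero (mul_ne_zero (mul_ne_zero (mul_ne_zero hCne
    (pow_ne_zero 3 (ne_of_gt hp₀pos))) (pow_ne_zero 2 hDne)) hJac)
    (by norm_num : (6:ℝ) ≠ 0)) hzero


end
end
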